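/- arXiv:math/0312408 — 4 statements merged into one kernel-verified Lean document; each statement's English description precedes it below -/
import Mathlib

section
/- Let R be a commutative local ring whose residue field is infinite, let n ≤ m be natural numbers, and let (v_1, …, v_k) be a unimodular frame in R^m with n ≥ k + 1. Then there exists a vector v lying in the submodule of R^m spanned by the standard basis vectors e_1, …, e_n such that (v, v_1, …, v_k) is a unimodular frame in R^m. -/
namespace HS

variable {R : Type} [CommRing R] {m : ℕ}

/-- A tuple of vectors in `R^m` is a *unimodular frame* if the vectors are linearly independent
and their span is a direct summand of `R^m` (i.e. they form a basis of a free direct summand). -/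
def IsUnimodularFrame {K : ℕ} (v : Fin K → (Fin m → R)) : Prop :=
  LinearIndependent R v ∧
    ∃ W : Submodule R (Fin m → R), IsCompl (Submodule.span R (Set.range v)) W

/-- The `i`-th standard basis vector of `R^m`. -/
def stdBasis (i : Fin m) : Fin m → R := Pi.single i 1

end HS

open HS IsLocalRing

section Aux

variable {R : Type} [CommRing R] {m : ℕ}

/-- If `g ∘ F = id` then the range of `F` and the kernel of `g` are complementary. -/
theorem HSaux.isCompl_range_ker {M N : Type} [AddCommGroup M] [Module R M]
    [AddCommGroup N] [Module R N] (F : N →ₗ[R] M) (g : M →ₗ[R] N)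
    (h : g ∘ₗ F = LinearMap.id) :
    IsCompl (LinearMap.range F) (LinearMap.ker g) := by
  have hgF : ∀ c, g (F c) = c := fun c => congrArg (fun f => f c) (congrArg DFunLike.coe h)
  constructor
  · rw [disjoint_iff_inf_le]
    rintro x ⟨⟨c, rfl⟩, hx2⟩
    have hc : c = 0 := by rw [← hgF c]; exact hx2
    simp [hc]
  · rw [codisjoint_iff_le_sup]
    intro x _
    have : x = F (g x) + (x - F (g x)) := by abel
    rw [this]
    refine Submodule.add_mem_sup ⟨g x, rfl⟩ ?_
    simp [LinearMap.mem_ker, map_sub, hgF]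

variable [IsLocalRing R]

/-- If the residues of a family of vectors are linearly independent over the residue field,
then the family is a unimodular frame. -/
theorem HSaux.isUnimodularFrame_of_li {K : ℕ} (w : Fin K → (Fin m → R))
    (hw : LinearIndependent (ResidueField R) (fun i j => residue R (w i j))) :
    IsUnimodularFrame w := by
  classical
  set κ := ResidueField R
  set f : Fin K → Fin m → κ := fun i j => residue R (w i j) with hfdef
  obtain ⟨T, hT⟩ := Submodule.exists_isCompl (Submodule.span κ (Set.range f))
  set proj := (Submodule.span κ (Set.range f)).linearProjOfIsCompl T hT with hprojdef
  set gbar : (Fin m → κ) →ₗ[κ] (Fin K → κ) :=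
    (Finsupp.linearEquivFunOnFinite κ κ (Fin K)).toLinearMap ∘ₗ hw.repr ∘ₗ proj with hgbardef
  have hgbar : ∀ i, gbar (f i) = Pi.single i 1 := by
    intro i
    have hmem : f i ∈ Submodule.span κ (Set.range f) := Submodule.subset_span ⟨i, rfl⟩
    have h1 : proj (f i) = ⟨f i, hmem⟩ :=
      Submodule.linearProjOfIsCompl_apply_left hT ⟨f i, hmem⟩
    have h2 : hw.repr ⟨f i, hmem⟩ = Finsupp.single i 1 := hw.repr_eq_single i _ rfl
    simp [hgbardef, h1, h2, Finsupp.linearEquivFunOnFinite_single]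
  -- matrices
  set Gbar : Matrix (Fin K) (Fin m) κ := LinearMap.toMatrix' gbar with hGbardef
  choose G hG using fun (i : Fin K) (j : Fin m) => residue_surjective (R := R) (Gbar i j)
  set M : Matrix (Fin m) (Fin K) R := Matrix.of (fun j i => w i j) with hMdef
  have hMmap : (M.map (residue R)) = Matrix.of (fun j i => f i j) := rfl
  have hmul : (Matrix.of G * M).map (residue R) = 1 := by
    have hmm : (Matrix.of G * M).map (residue R) =
        (Matrix.of G).map (residue R) * M.map (residue R) := Matrix.map_mul
    have hGmap : (Matrix.of G).map (residue R) = Gbar := by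
      ext i j; exact hG i j
    rw [hmm, hGmap, hMmap]
    ext i i'
    have : (Gbar * Matrix.of fun j i => f i j) i i' = (Gbar.mulVec (f i')) i := by
      simp [Matrix.mul_apply, Matrix.mulVec, dotProduct]
    rw [this]
    have : Gbar.mulVec (f i') = gbar (f i') := by
      rw [hGbardef, ← Matrix.toLin'_apply, Matrix.toLin'_toMatrix']
    rw [this, hgbar i']
    by_cases h : i = i' <;> simp [Matrix.one_apply, Pi.single_apply, h]
  have hdet : IsUnit (Matrix.of G * M).det := by
    by_contra hnd
    have hmem : (Matrix.of G * M).det ∈ maximalIdeal R := hnd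
    have : residue R (Matrix.of G * M).det = 0 := (residue_eq_zero_iff _).mpr hmem
    rw [RingHom.map_det, RingHom.mapMatrix_apply, hmul, Matrix.det_one] at this
    exact one_ne_zero this
  set B : Matrix (Fin K) (Fin m) R := (Matrix.of G * M)⁻¹ * Matrix.of G with hBdef
  have hBM : B * M = 1 := by
    rw [hBdef, Matrix.mul_assoc]
    exact Matrix.nonsing_inv_mul _ hdet
  set F : (Fin K → R) →ₗ[R] (Fin m → R) := Matrix.toLin' M with hFdef
  set g : (Fin m → R) →ₗ[R] (Fin K → R) := Matrix.toLin' B with hgdef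
  have hgF : g ∘ₗ F = LinearMap.id := by
    rw [hgdef, hFdef, ← Matrix.toLin'_mul, hBM, Matrix.toLin'_one]
  have hgFc : ∀ c, g (F c) = c := fun c => congrArg (fun f => f c) (congrArg DFunLike.coe hgF)
  have hFc : ∀ c : Fin K → R, F c = ∑ i, c i • w i := by
    intro c
    funext j
    simp only [hFdef, Matrix.toLin'_apply, Matrix.mulVec, dotProduct, hMdef,
      Matrix.of_apply, Finset.sum_apply, Pi.smul_apply, smul_eq_mul]
    exact Finset.sum_congr rfl fun i _ => mul_comm _ _
  have hrange : LinearMap.range F = Submodule.span R (Set.range w) := by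
    apply le_antisymm
    · rintro x ⟨c, rfl⟩
      rw [hFc]
      exact Submodule.sum_mem _ fun i _ =>
        Submodule.smul_mem _ _ (Submodule.subset_span ⟨i, rfl⟩)
    · rw [Submodule.span_le]
      rintro x ⟨i, rfl⟩
      refine ⟨Pi.single i 1, ?_⟩
      rw [hFc]
      simp [Pi.single_apply, ite_smul]
  constructor
  · rw [Fintype.linearIndependent_iff]
    intro c hc
    have : F c = 0 := by rw [hFc]; exact hc
    have hc0 : c = 0 := by rw [← hgFc c, this, map_zero]
    intro i; rw [hc0]; rfl
  · exact ⟨LinearMap.ker g, hrange ▸ HSaux.isCompl_range_ker F g hgF⟩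

/-- The residues of a unimodular frame are linearly independent over the residue field. -/
theorem HSaux.li_of_isUnimodularFrame {K : ℕ} (w : Fin K → (Fin m → R))
    (hw : IsUnimodularFrame w) :
    LinearIndependent (ResidueField R) (fun i j => residue R (w i j)) := by
  classical
  obtain ⟨hli, W, hc⟩ := hw
  set b := Module.Basis.span hli with hbdef
  set proj := (Submodule.span R (Set.range w)).linearProjOfIsCompl W hc with hprojdef
  set φ : Fin K → ((Fin m → R) →ₗ[R] R) := fun j => (b.coord j) ∘ₗ proj with hφdef
  have hφw : ∀ j i, φ j (w i) = if i = j then 1 else 0 := by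
    intro j i
    have hmem : w i ∈ Submodule.span R (Set.range w) := Submodule.subset_span ⟨i, rfl⟩
    have h1 : proj (w i) = ⟨w i, hmem⟩ :=
      Submodule.linearProjOfIsCompl_apply_left hc ⟨w i, hmem⟩
    have h2 : (⟨w i, hmem⟩ : Submodule.span R (Set.range w)) = b i :=
      (Module.Basis.span_apply hli i).symm
    simp only [hφdef, LinearMap.comp_apply, h1, h2, Module.Basis.coord_apply, Module.Basis.repr_self]
    exact Finsupp.single_apply
  rw [Fintype.linearIndependent_iff]
  intro c hc0
  choose cc hcc using fun i => residue_surjective (R := R) (c i)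
  set x : Fin m → R := ∑ i, cc i • w i with hxdef
  have hxm : ∀ j', x j' ∈ maximalIdeal R := by
    intro j'
    rw [← residue_eq_zero_iff]
    have : residue R (x j') = ∑ i, c i * residue R (w i j') := by
      rw [hxdef]
      simp only [Finset.sum_apply, Pi.smul_apply, smul_eq_mul, map_sum, map_mul]
      exact Finset.sum_congr rfl fun i _ => by rw [hcc i]
    rw [this]
    have := congrFun hc0 j'
    simpa using this
  have hφx : ∀ j, φ j x = cc j := by
    intro j
    rw [hxdef, map_sum]
    simp only [map_smul, smul_eq_mul, hφw]
    simp
  have hφxm : ∀ j, φ j x ∈ maximalIdeal R := by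
    intro j
    have hx : x = ∑ j', (x j') • fun j'' => if j' = j'' then (1 : R) else 0 :=
      pi_eq_sum_univ x
    rw [hx, map_sum]
    refine Ideal.sum_mem _ fun j' _ => ?_
    rw [map_smul, smul_eq_mul]
    exact Ideal.mul_mem_right _ _ (hxm j')
  intro j
  have : cc j ∈ maximalIdeal R := hφx j ▸ hφxm j
  rw [← hcc j]
  exact (residue_eq_zero_iff _).mpr this

end Aux

open HS in
/-- For a local ring `R` with infinite residue field and `n ≤ m`: any unimodular frame
`(v_1, …, v_k)` in `R^m` with `n ≥ k + 1` can be extended by a vector `v` lying in the span of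
the first `n` standard basis vectors `e_1, …, e_n` so that `(v, v_1, …, v_k)` is again a
unimodular frame. -/
theorem exists_extension_of_unimodular_frame
    (R : Type) [CommRing R] [IsLocalRing R] [Infinite (IsLocalRing.ResidueField R)]
    (n m : ℕ) (hnm : n ≤ m) (k : ℕ) (hk : k + 1 ≤ n)
    (v : Fin k → (Fin m → R)) (hv : IsUnimodularFrame v) :
    ∃ u : Fin m → R,
      u ∈ Submodule.span R (Set.range fun i : Fin n => stdBasis (R := R) (Fin.castLE hnm i)) ∧
      IsUnimodularFrame (Fin.cons u v) := by
  classical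
  set κ := IsLocalRing.ResidueField R
  have hvbar : LinearIndependent κ (fun i j => IsLocalRing.residue R (v i j)) :=
    HSaux.li_of_isUnimodularFrame v hv
  set f : Fin k → Fin m → κ := fun i j => IsLocalRing.residue R (v i j) with hfdef
  set e' : Fin n → Fin m → κ := fun i => Pi.single (Fin.castLE hnm i) 1 with he'def
  have he'li : LinearIndependent κ e' := by
    have hbf := (Pi.basisFun κ (Fin m)).linearIndependent
    have h2 := hbf.comp (Fin.castLE hnm) (Fin.castLE_injective hnm)
    have : e' = (Pi.basisFun κ (Fin m)) ∘ Fin.castLE hnm := by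
      funext i
      simp [he'def, Pi.basisFun_apply]
    rwa [this]
  have hE : ¬ (Submodule.span κ (Set.range e') ≤ Submodule.span κ (Set.range f)) := by
    intro hle
    have h1 : Module.finrank κ (Submodule.span κ (Set.range e')) = n := by
      rw [finrank_span_eq_card he'li, Fintype.card_fin]
    have h2 : Module.finrank κ (Submodule.span κ (Set.range f)) ≤ k := by
      have := finrank_range_le_card (R := κ) f
      simpa [Set.finrank] using this
    have h3 := Submodule.finrank_mono hle
    omega
  obtain ⟨wbar, hw1, hw2⟩ := SetLike.not_le_iff_exists.mp hE
  obtain ⟨c, hcw⟩ := (Submodule.mem_span_range_iff_exists_fun κ).mp hw1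
  choose cc hcc using fun i => IsLocalRing.residue_surjective (R := R) (c i)
  set u : Fin m → R := ∑ i, cc i • stdBasis (R := R) (Fin.castLE hnm i) with hudef
  have hsingle : ∀ (a : Fin m) (j : Fin m),
      IsLocalRing.residue R ((Pi.single a (1 : R) : Fin m → R) j) = (Pi.single a (1 : κ) : Fin m → κ) j := by
    intro a j
    by_cases h : j = a <;> simp [Pi.single_apply, h]
  have hured : (fun j => IsLocalRing.residue R (u j)) = wbar := by
    funext j
    have : IsLocalRing.residue R (u j) = ∑ i, c i * e' i j := by
      rw [hudef]
      simp only [Finset.sum_apply, Pi.smul_apply, smul_eq_mul, map_sum, map_mul]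
      refine Finset.sum_congr rfl fun i _ => ?_
      rw [hcc i, HS.stdBasis, hsingle, he'def]
    rw [this, ← hcw]
    simp
  refine ⟨u, ?_, ?_⟩
  · exact Submodule.sum_mem _ fun i _ =>
      Submodule.smul_mem _ _ (Submodule.subset_span ⟨i, rfl⟩)
  · apply HSaux.isUnimodularFrame_of_li
    have hred : (fun i j => IsLocalRing.residue R ((Fin.cons u v : Fin (k+1) → Fin m → R) i j)) =
        (Fin.cons wbar f : Fin (k+1) → Fin m → κ) := by
      funext i
      refine Fin.cases ?_ ?_ i
      · simpa [Fin.cons_zero] using hured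
      · intro i'
        simp [Fin.cons_succ, hfdef]
    rw [hred]
    exact hvbar.fin_cons hw2
end

section
/- Let R be a commutative local ring whose residue field is infinite, let n ≤ m be natural numbers, let (w_1, …, w_r) be a unimodular frame in R^m, and let finitely many tuples (v_0^i, …, v_k^i), 1 ≤ i ≤ s, of vectors in R^m be given such that each (v_0^i, …, v_k^i, w_1, …, w_r) is a unimodular frame in R^m, where k ≤ n − r − 2. Then there exists a vector v lying in the submodule of R^m spanned by the standard basis vectors e_1, …, e_n such that (v, v_0^i, …, v_k^i, w_1, …, w_r) is a unimodular frame in R^m for every i with 1 ≤ i ≤ s. -/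
open HS IsLocalRing

section Aux

variable {R : Type} [CommRing R] [IsLocalRing R] {m : ℕ}

/-- entrywise residue of a vector -/
noncomputable def redv (x : Fin m → R) : Fin m → ResidueField R := fun t => residue R (x t)

theorem isUnimodularFrame_of_residue {K : ℕ} (v : Fin K → (Fin m → R))
    (h : LinearIndependent (ResidueField R) fun j => redv (v j)) :
    IsUnimodularFrame v := by
  classical
  set κ := ResidueField R
  set φ := residue R with hφ
  set Mb : Matrix (Fin m) (Fin K) κ := Matrix.of fun t j => φ (v j t) with hMbdef
  have hker : LinearMap.ker Mb.mulVecLin = ⊥ := by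
    rw [LinearMap.ker_eq_bot']
    intro c hc
    have hsum : ∑ j, c j • (fun t => redv (v t)) j = 0 := by
      funext t
      have := congr_fun hc t
      simpa [Mb, Matrix.mulVecLin_apply, Matrix.mulVec, dotProduct, redv,
        Finset.sum_apply, mul_comm] using this
    funext j
    exact Fintype.linearIndependent_iff.mp h c hsum j
  obtain ⟨g, hg⟩ := Mb.mulVecLin.exists_leftInverse_of_injective hker
  set Gb : Matrix (Fin K) (Fin m) κ := LinearMap.toMatrix' g with hGbdef
  choose G hG using fun (i : Fin K) (t : Fin m) =>
    Ideal.Quotient.mk_surjective (I := maximalIdeal R) (Gb i t)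
  set M : Matrix (Fin m) (Fin K) R := Matrix.of fun t j => v j t with hMdef
  set A : Matrix (Fin K) (Fin K) R := (Matrix.of G) * M with hAdef
  have hGmap : (Matrix.of G).map φ = Gb := by
    ext i t; exact hG i t
  have hMmap : M.map φ = Mb := rfl
  have hAmap : A.map φ = 1 := by
    rw [hAdef, Matrix.map_mul, hGmap, hMmap]
    have h1 : g.comp Mb.mulVecLin = LinearMap.id := hg
    have := congrArg LinearMap.toMatrix' h1
    rwa [LinearMap.toMatrix'_comp, ← Matrix.toLin'_apply', LinearMap.toMatrix'_toLin', LinearMap.toMatrix'_id] at this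
  have hdet : IsUnit A.det := by
    rw [← IsLocalRing.notMem_maximalIdeal]
    intro hmem
    have : φ A.det = 0 := Ideal.Quotient.eq_zero_iff_mem.mpr hmem
    rw [RingHom.map_det, RingHom.mapMatrix_apply, hAmap, Matrix.det_one] at this
    exact one_ne_zero this
  set P : (Fin m → R) →ₗ[R] (Fin K → R) := (A⁻¹ * Matrix.of G).mulVecLin with hPdef
  have hPM : ∀ c : Fin K → R, P (M.mulVecLin c) = c := by
    intro c
    have : P (M.mulVecLin c) = ((A⁻¹ * Matrix.of G) * M).mulVecLin c := by
      rw [Matrix.mulVecLin_mul]; rfl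
    rw [this, Matrix.mul_assoc, ← hAdef, Matrix.nonsing_inv_mul A hdet, Matrix.mulVecLin_one]
    rfl
  have hMc : ∀ c : Fin K → R, M.mulVecLin c = ∑ j, c j • v j := by
    intro c
    funext t
    simp [M, Matrix.mulVecLin_apply, Matrix.mulVec, dotProduct,
      Finset.sum_apply, mul_comm]
  have hli : LinearIndependent R v := by
    rw [Fintype.linearIndependent_iff]
    intro c hc j
    have : P (M.mulVecLin c) = c := hPM c
    rw [hMc, hc, map_zero] at this
    exact (congr_fun this j).symm
  have hrange : LinearMap.range M.mulVecLin = Submodule.span R (Set.range v) := by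
    rw [Matrix.range_mulVecLin]
    congr 1
  refine ⟨hli, ?_⟩
  set N := Submodule.span R (Set.range v) with hNdef
  set f : (Fin m → R) →ₗ[R] N :=
    LinearMap.codRestrict N (M.mulVecLin.comp P)
      (fun x => by
        rw [← hrange]
        exact LinearMap.mem_range_self _ _) with hfdef
  have hproj : ∀ x : N, f x = x := by
    intro x
    obtain ⟨c, hc⟩ : (x : Fin m → R) ∈ LinearMap.range M.mulVecLin := by
      rw [hrange]; exact x.2
    apply Subtype.ext
    show M.mulVecLin (P (x : Fin m → R)) = x
    rw [← hc, hPM]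
  exact ⟨LinearMap.ker f, LinearMap.isCompl_of_proj hproj⟩

end Aux

section Aux2

variable {R : Type} [CommRing R] [IsLocalRing R] {m : ℕ}

theorem residue_linearIndependent_of_frame {K : ℕ} (v : Fin K → (Fin m → R))
    (hv : IsUnimodularFrame v) :
    LinearIndependent (ResidueField R) fun j => redv (v j) := by
  classical
  obtain ⟨hli, W, hcompl⟩ := hv
  set N := Submodule.span R (Set.range v) with hNdef
  let b : Module.Basis (Fin K) R N := Module.Basis.span hli
  let p := Submodule.linearProjOfIsCompl N W hcompl
  let c : Fin K → ((Fin m → R) →ₗ[R] R) := fun j => (b.coord j).comp p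
  have hcv : ∀ j i, c j (v i) = if i = j then 1 else 0 := by
    intro j i
    have hvN : v i ∈ N := Submodule.subset_span (Set.mem_range_self i)
    have hp : p (v i) = b i := by
      have h1 : p (v i) = ⟨v i, hvN⟩ :=
        Submodule.linearProjOfIsCompl_apply_left hcompl ⟨v i, hvN⟩
      rw [h1]
      exact (Module.Basis.span_apply hli i).symm
    show b.coord j (p (v i)) = _
    rw [hp, Module.Basis.coord_apply, Module.Basis.repr_self, Finsupp.single_apply]
  have hmem : ∀ j (x : Fin m → R), (∀ t, x t ∈ maximalIdeal R) →
      c j x ∈ maximalIdeal R := by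
    intro j x hx
    have hxsum : x = ∑ t, x t • (Pi.single t 1 : Fin m → R) := by
      funext t'
      simp [Pi.single_apply, Finset.sum_apply]
    rw [hxsum, map_sum]
    refine Ideal.sum_mem _ fun t _ => ?_
    rw [map_smul, smul_eq_mul]
    exact Ideal.mul_mem_right _ _ (hx t)
  rw [Fintype.linearIndependent_iff]
  intro g hg j
  choose g' hg' using fun i => Ideal.Quotient.mk_surjective (I := maximalIdeal R) (g i)
  set x : Fin m → R := ∑ i, g' i • v i with hxdef
  have hxt : ∀ t, x t ∈ maximalIdeal R := by
    intro t
    have h0 := congr_fun hg t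
    simp only [Finset.sum_apply, Pi.smul_apply, smul_eq_mul, Pi.zero_apply] at h0
    have : residue R (x t) = 0 := by
      rw [hxdef]
      simp only [Finset.sum_apply, Pi.smul_apply, smul_eq_mul, map_sum, map_mul]
      rw [← h0]
      exact Finset.sum_congr rfl fun i _ =>
        congrArg (fun a => a * residue R (v i t)) (hg' i)
    exact Ideal.Quotient.eq_zero_iff_mem.mp this
  have hcx : c j x = g' j := by
    rw [hxdef, map_sum]
    have : ∀ i, c j (g' i • v i) = if i = j then g' i else 0 := by
      intro i
      rw [map_smul, smul_eq_mul, hcv]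
      split <;> simp
    simp only [this]
    simp
  have hgj : g' j ∈ maximalIdeal R := hcx ▸ hmem j x hxt
  have : residue R (g' j) = 0 := Ideal.Quotient.eq_zero_iff_mem.mpr hgj
  rw [← hg' j]
  exact this

end Aux2


open HS in
/-- For a local ring `R` with infinite residue field, `n ≤ m`, a unimodular frame
`(w_1, …, w_r)` in `R^m`, and finitely many tuples `(v_0^i, …, v_k^i)` (`1 ≤ i ≤ s`) such that
each `(v_0^i, …, v_k^i, w_1, …, w_r)` is a unimodular frame, where `k ≤ n - r - 2`: there is a
vector `v` in the span of the standard basis vectors `e_1, …, e_n` such that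
`(v, v_0^i, …, v_k^i, w_1, …, w_r)` is a unimodular frame for every `i`. -/
theorem exists_common_extension_of_unimodular_frames
    (R : Type) [CommRing R] [IsLocalRing R] [Infinite (IsLocalRing.ResidueField R)]
    (n m : ℕ) (hnm : n ≤ m) (k r s : ℕ) (hk : k + r + 2 ≤ n)
    (w : Fin r → (Fin m → R)) (hw : IsUnimodularFrame w)
    (v : Fin s → Fin (k+1) → (Fin m → R))
    (hv : ∀ i, IsUnimodularFrame (Fin.append (v i) w)) :
    ∃ u : Fin m → R,
      u ∈ Submodule.span R (Set.range fun i : Fin n => stdBasis (R := R) (Fin.castLE hnm i)) ∧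
      ∀ i, IsUnimodularFrame (Fin.cons u (Fin.append (v i) w)) := by
  classical
  set κ := ResidueField R with hκ
  have hred : ∀ i, LinearIndependent κ fun j => redv (Fin.append (v i) w j) :=
    fun i => residue_linearIndependent_of_frame _ (hv i)
  set eb : Fin n → (Fin m → κ) := fun j => redv (stdBasis (R := R) (Fin.castLE hnm j))
    with hebdef
  have heb : ∀ j, eb j = Pi.single (Fin.castLE hnm j) (1 : κ) := by
    intro j
    funext t
    simp only [hebdef, redv, stdBasis, Pi.single_apply]
    split <;> simp
  have hebli : LinearIndependent κ eb := by
    have h1 : LinearIndependent κ fun t : Fin m => (Pi.single t 1 : Fin m → κ) := by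
      have := (Pi.basisFun κ (Fin m)).linearIndependent
      convert this using 1
      funext t
      rw [Pi.basisFun_apply]
    have h2 := h1.comp (Fin.castLE hnm) (Fin.castLE_injective hnm)
    convert h2 using 1
    funext j
    rw [heb j]
    rfl
  set E := Submodule.span κ (Set.range eb) with hEdef
  have hEfin : Module.finrank κ E = n := by
    rw [hEdef, finrank_span_eq_card hebli, Fintype.card_fin]
  set S : Fin s → Submodule κ (Fin m → κ) :=
    fun i => Submodule.span κ (Set.range fun j => redv (Fin.append (v i) w j)) with hSdef
  have hSproper : ∀ i, Submodule.comap E.subtype (S i) ≠ ⊤ := by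
    intro i htop
    have hle : E ≤ S i := (Submodule.comap_subtype_eq_top).mp htop
    have h1 : Module.finrank κ E ≤ Module.finrank κ (S i) :=
      Submodule.finrank_mono hle
    have h2 : Module.finrank κ (S i) ≤ k + 1 + r := by
      have := finrank_range_le_card (R := κ) fun j => redv (Fin.append (v i) w j)
      simpa [Set.finrank] using this
    omega
  have hcover : (⋃ i, ((S i).comap E.subtype : Set E)) ≠ Set.univ := by
    intro hcov
    obtain ⟨i, hi⟩ := Subspace.exists_eq_top_of_iUnion_eq_univ hcov
    exact hSproper i hi
  obtain ⟨x, hx⟩ := (Set.ne_univ_iff_exists_notMem _).mp hcover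
  simp only [Set.mem_iUnion, not_exists, SetLike.mem_coe, Submodule.mem_comap] at hx
  -- lift x to u
  obtain ⟨c, hc⟩ : ∃ c : Fin n → κ, ∑ j, c j • eb j = (x : Fin m → κ) := by
    exact (Submodule.mem_span_range_iff_exists_fun κ).mp x.2
  choose c' hc' using fun j => Ideal.Quotient.mk_surjective (I := maximalIdeal R) (c j)
  set u : Fin m → R := ∑ j, c' j • stdBasis (R := R) (Fin.castLE hnm j) with hudef
  have humem : u ∈ Submodule.span R
      (Set.range fun i : Fin n => stdBasis (R := R) (Fin.castLE hnm i)) :=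
    Submodule.sum_mem _ fun j _ =>
      Submodule.smul_mem _ _ (Submodule.subset_span ⟨j, rfl⟩)
  have hredu : redv u = (x : Fin m → κ) := by
    funext t
    have := congr_fun hc t
    simp only [Finset.sum_apply, Pi.smul_apply, smul_eq_mul] at this
    rw [← this]
    simp only [redv, hudef, Finset.sum_apply, Pi.smul_apply, smul_eq_mul, map_sum, map_mul]
    refine Finset.sum_congr rfl fun j _ => ?_
    exact congrArg (fun a => a * residue R (stdBasis (R := R) (Fin.castLE hnm j) t)) (hc' j)
  refine ⟨u, humem, fun i => ?_⟩
  apply isUnimodularFrame_of_residue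
  have hconseq : (fun j : Fin (k+1+r+1) => redv (Fin.cons (α := fun _ => Fin m → R) u (Fin.append (v i) w) j)) =
      Fin.cons (x : Fin m → κ) (fun j => redv (Fin.append (v i) w j)) := by
    funext j
    refine Fin.cases ?_ (fun j' => ?_) j
    · simp [hredu]
    · simp
  rw [hconseq, linearIndependent_fin_cons]
  exact ⟨hred i, hx i⟩
end

section
/- Let k be a field, let R be a commutative local ring whose residue field is infinite, let ι be a nonempty finite index set, and for each i ∈ ι let S_i be a k-algebra, φ_i : R → S_i a ring homomorphism, and n_i ≥ 1, t_i ≥ 1 integers. Let B = ⊗_{i∈ι} S_i^{⊗ n_i} (all tensor products over k), on which each unit r ∈ R^× acts k-linearly by r · ⊗_{i∈ι}(a_{1,i} ⊗ ⋯ ⊗ a_{n_i,i}) = ⊗_{i∈ι}(φ_i(r)^{t_i} a_{1,i} ⊗ ⋯ ⊗ φ_i(r)^{t_i} a_{n_i,i}). Then the module of coinvariants H_0(R^×, B) vanishes; equivalently, the k-submodule of B spanned by the elements r·b − b, for r ∈ R^× and b ∈ B, is all of B. -/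
set_option synthInstance.maxHeartbeats 1000000
set_option maxHeartbeats 2000000
set_option linter.unusedSectionVars false

open scoped TensorProduct

/-! ### A Dedekind-Artin style independence lemma with coset avoidance -/

open Classical in
private lemma lemC {G E K : Type*} [CommGroup G] [CommGroup E] [Field K]
    (ν : G →* E) (hν : ∀ V : Finset E, ∃ a : G, ν a ∉ V) {ι : Type*} :
    ∀ (m : ℕ) (u : Finset ι), u.card ≤ m →
      ∀ (χ : ι → G →* K) (c : ι → K) (V : Finset E),
      (∀ a : G, ν a ∉ V → ∑ i ∈ u, c i * χ i a = 0) →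
      ∀ i₀ ∈ u, ∑ i ∈ u, (if χ i = χ i₀ then c i else 0) = 0 := by
  intro m
  induction m with
  | zero =>
    intro u hu χ c V hrel i₀ hi₀
    rw [Nat.le_zero, Finset.card_eq_zero] at hu
    subst hu; exact absurd hi₀ (Finset.notMem_empty i₀)
  | succ m IH =>
    intro u hu χ c V hrel i₀ hi₀
    by_cases hall : ∀ j ∈ u, χ j = χ i₀
    · obtain ⟨a, ha⟩ := hν V
      have h0 := hrel a ha
      have h1 : (∑ i ∈ u, c i) * χ i₀ a = 0 := by
        rw [Finset.sum_mul, ← h0]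
        exact Finset.sum_congr rfl fun j hj => by rw [hall j hj]
      have h2 : (χ i₀) a ≠ 0 := by
        have hinv : (χ i₀) a * (χ i₀) a⁻¹ = 1 := by rw [← map_mul]; simp
        intro h; rw [h, zero_mul] at hinv; exact one_ne_zero hinv.symm
      have h3 : ∑ i ∈ u, c i = 0 := by
        rcases mul_eq_zero.mp h1 with h | h
        · exact h
        · exact absurd h h2
      calc ∑ i ∈ u, (if χ i = χ i₀ then c i else 0) = ∑ i ∈ u, c i :=
            Finset.sum_congr rfl fun j hj => if_pos (hall j hj)
        _ = 0 := h3
    · push_neg at hall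
      obtain ⟨j₀, hj₀u, hj₀⟩ := hall
      have hg : ∃ g : G, χ j₀ g ≠ χ i₀ g := by
        by_contra h
        push_neg at h
        exact hj₀ (MonoidHom.ext h)
      obtain ⟨g, hg⟩ := hg
      have hrel' : ∀ a : G, ν a ∉ V ∪ V.image (fun e => (ν g)⁻¹ * e) →
          ∑ i ∈ u.erase j₀, (c i * (χ i g - χ j₀ g)) * χ i a = 0 := by
        intro a haV'
        have haV : ν a ∉ V := fun h => haV' (Finset.mem_union_left _ h)
        have hgaV : ν (g * a) ∉ V := by
          intro h
          apply haV'
          apply Finset.mem_union_right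
          refine Finset.mem_image.mpr ⟨ν (g * a), h, ?_⟩
          rw [map_mul]; group
        have e1 := hrel (g * a) hgaV
        have e2 := hrel a haV
        have e3 : ∑ i ∈ u, (c i * (χ i g - χ j₀ g)) * χ i a = 0 := by
          have heq : ∑ i ∈ u, (c i * (χ i g - χ j₀ g)) * χ i a
              = ∑ i ∈ u, c i * χ i (g * a) - χ j₀ g * ∑ i ∈ u, c i * χ i a := by
            rw [Finset.mul_sum, ← Finset.sum_sub_distrib]
            refine Finset.sum_congr rfl fun j hj => ?_
            rw [map_mul]
            ring
          rw [heq, e1, e2, mul_zero, sub_zero]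
        rw [← e3]
        apply Finset.sum_erase
        rw [sub_self, mul_zero, zero_mul]
      have hcard : (u.erase j₀).card ≤ m := by
        have := Finset.card_erase_of_mem hj₀u
        omega
      have hi₀' : i₀ ∈ u.erase j₀ :=
        Finset.mem_erase.mpr ⟨fun h => hj₀ (h ▸ rfl), hi₀⟩
      have key := IH (u.erase j₀) hcard χ (fun i => c i * (χ i g - χ j₀ g)) _ hrel' i₀ hi₀'
      have key2 : (∑ i ∈ u.erase j₀, (if χ i = χ i₀ then c i else 0)) * (χ i₀ g - χ j₀ g) = 0 := by
        calc (∑ i ∈ u.erase j₀, (if χ i = χ i₀ then c i else 0)) * (χ i₀ g - χ j₀ g)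
            = ∑ i ∈ u.erase j₀,
                (if χ i = χ i₀ then (fun i => c i * (χ i g - χ j₀ g)) i else 0) := by
              rw [Finset.sum_mul]
              refine Finset.sum_congr rfl fun j hj => ?_
              by_cases h : χ j = χ i₀
              · rw [if_pos h, if_pos h]
                show c j * ((χ i₀) g - (χ j₀) g) = c j * ((χ j) g - (χ j₀) g)
                rw [h]
              · rw [if_neg h, if_neg h, zero_mul]
          _ = 0 := key
      have hne : χ i₀ g - χ j₀ g ≠ 0 := fun h => hg (by linear_combination -h)
      have key3 : ∑ i ∈ u.erase j₀, (if χ i = χ i₀ then c i else 0) = 0 := by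
        rcases mul_eq_zero.mp key2 with h | h
        · exact h
        · exact absurd h hne
      have hz : (if χ j₀ = χ i₀ then c j₀ else (0:K)) = 0 := by rw [if_neg hj₀]
      rw [← Finset.sum_erase u hz]
      exact key3

/-! ### No family of ring homomorphisms from a local ring with infinite residue field
to a field can have unit-products identically one -/

section LemB
variable {R : Type*} [CommRing R] [IsLocalRing R] [Infinite (IsLocalRing.ResidueField R)]
  {K : Type*} [Field K]

open IsLocalRing

open Classical in
private lemma lemB {Λ : Type*} (f : Λ → R →+* K) :
    ∀ s : Finset Λ, s.Nonempty → (∀ r : Rˣ, ∏ l ∈ s, f l (r : R) = 1) → False := by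
  have hν : ∀ V : Finset (ResidueField R)ˣ,
      ∃ a : Rˣ, Units.map (residue R).toMonoidHom a ∉ V := by
    intro V
    obtain ⟨x, hx⟩ := Infinite.exists_notMem_finset
      (insert (0 : ResidueField R) (V.image Units.val))
    obtain ⟨r, hr⟩ := residue_surjective (R := R) x
    have hx0 : x ≠ 0 := fun h => hx (by rw [h]; exact Finset.mem_insert_self _ _)
    have hru : IsUnit r := (residue_ne_zero_iff_isUnit r).mp (hr ▸ hx0)
    refine ⟨hru.unit, fun hmem => hx ?_⟩
    apply Finset.mem_insert_of_mem
    refine Finset.mem_image.mpr ⟨_, hmem, ?_⟩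
    show residue R (hru.unit : R) = x
    rw [hru.unit_spec, hr]
  intro s
  induction s using Finset.strongInductionOn with
  | _ s IH =>
  intro hs hf
  by_cases hex : ∃ t, t ⊂ s ∧ t.Nonempty ∧ ∀ r : Rˣ, ∏ l ∈ t, f l (r : R) = 1
  · obtain ⟨t, hts, htne, hft⟩ := hex
    exact IH t hts htne hft
  · push_neg at hex
    set χ : Finset Λ → (Rˣ →* K) :=
      fun t => ∏ l ∈ t, (f l).toMonoidHom.comp (Units.coeHom R) with hχ
    have hχap : ∀ (t : Finset Λ) (a : Rˣ), χ t a = ∏ l ∈ t, f l (a : R) := by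
      intro t a
      rw [hχ]
      simp [MonoidHom.finset_prod_apply]
    have hrel : ∀ a : Rˣ, Units.map (residue R).toMonoidHom a ∉ ({-1} : Finset (ResidueField R)ˣ) →
        ∑ t ∈ s.powerset.erase ∅, (fun _ => (1:K)) t * χ t a = 0 := by
      intro a ha
      have hres : residue R ((a : R)) ≠ -1 := by
        intro h
        apply ha
        rw [Finset.mem_singleton]
        ext
        rw [Units.coe_map]
        exact h
      have hu : IsUnit ((1 : R) + (a : R)) := by
        rw [← residue_ne_zero_iff_isUnit, map_add, map_one]
        intro h
        exact hres (by linear_combination h)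
      have h1 := hf hu.unit
      rw [hu.unit_spec] at h1
      have h2 : ∀ l ∈ s, f l ((1:R) + (a:R)) = f l (a : R) + 1 := by
        intro l _
        rw [map_add, map_one, add_comm]
      rw [Finset.prod_congr rfl h2, Finset.prod_add] at h1
      have h3 : ∀ t ∈ s.powerset, ((∏ l ∈ t, f l (a:R)) * ∏ l ∈ s \ t, (1:K)) = χ t a := by
        intro t _
        rw [Finset.prod_const_one, mul_one, hχap]
      rw [Finset.sum_congr rfl h3] at h1
      have h4 : χ ∅ a + ∑ t ∈ s.powerset.erase ∅, χ t a = 1 := by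
        have hh := Finset.add_sum_erase s.powerset (fun t => (χ t) a)
          (Finset.empty_mem_powerset s)
        exact hh.trans h1
      have h5 : χ ∅ a = 1 := by rw [hχap, Finset.prod_empty]
      have h6 : ∑ t ∈ s.powerset.erase ∅, χ t a = 0 := by
        rw [h5] at h4
        linear_combination h4
      rw [← h6]
      exact Finset.sum_congr rfl fun t _ => one_mul _
    have hsmem : s ∈ s.powerset.erase ∅ :=
      Finset.mem_erase.mpr ⟨Finset.nonempty_iff_ne_empty.mp hs, Finset.mem_powerset_self s⟩
    have key := lemC (Units.map (residue R).toMonoidHom) hν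
      (s.powerset.erase ∅).card (s.powerset.erase ∅) le_rfl χ (fun _ => 1) _ hrel s hsmem
    have hone : ∑ t ∈ s.powerset.erase ∅, (if χ t = χ s then (fun _ => (1:K)) t else 0) = 1 := by
      rw [Finset.sum_eq_single_of_mem s hsmem]
      · rw [if_pos rfl]
      · intro t ht hts
        rw [if_neg]
        intro hts'
        have htmem := Finset.mem_erase.mp ht
        have htsub : t ⊂ s := lt_of_le_of_ne (Finset.mem_powerset.mp htmem.2) hts
        obtain ⟨r, hr⟩ := hex t htsub (Finset.nonempty_iff_ne_empty.mpr htmem.1)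
        apply hr
        rw [← hχap, hts', hχap]
        exact hf r
    rw [key] at hone
    exact one_ne_zero hone.symm
end LemB

/-! ### The tensor-algebra setup -/

section Main
variable (k : Type) [Field k]
    (R : Type) [CommRing R]
    (ι : Type) [Fintype ι] [Nonempty ι]
    (S : ι → Type) [∀ i, Ring (S i)] [∀ i, Algebra k (S i)]
    (φ : ∀ i, R →+* S i) (n : ι → ℕ)

private instance instSCCPi : SMulCommClass k (⨂[k] i, (⨂[k] (_ : Fin (n i)), S i))
    (⨂[k] i, (⨂[k] (_ : Fin (n i)), S i)) := by
  convert (Algebra.to_smulCommClass (R := k) (A := (⨂[k] i, (⨂[k] (_ : Fin (n i)), S i))))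

private noncomputable def ww (x : ∀ i, Fin (n i) → S i) :
    ⨂[k] i, (⨂[k] (_ : Fin (n i)), S i) :=
  PiTensorProduct.tprod k fun i => PiTensorProduct.tprod k (x i)

private lemma ww_mul (x y : ∀ i, Fin (n i) → S i) :
    ww k ι S n x * ww k ι S n y = ww k ι S n (fun i j => x i j * y i j) := by
  unfold ww
  rw [PiTensorProduct.tprod_mul_tprod]
  congr 1
  funext i
  rw [Pi.mul_apply, PiTensorProduct.tprod_mul_tprod]
  rfl

private lemma ww_one : ww k ι S n (fun _ _ => 1) = 1 := by
  unfold ww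
  rw [PiTensorProduct.one_def]
  exact congrArg (PiTensorProduct.tprod k) (funext fun i => (PiTensorProduct.one_def).symm)

private lemma inner_map_eq (i : ι) (a : S i) :
    PiTensorProduct.map (fun _ : Fin (n i) => LinearMap.mulLeft k a)
      = LinearMap.mulLeft k (PiTensorProduct.tprod k (fun _ : Fin (n i) => a)) := by
  apply PiTensorProduct.ext
  apply MultilinearMap.ext
  intro y
  simp only [LinearMap.compMultilinearMap_apply, PiTensorProduct.map_tprod,
    LinearMap.mulLeft_apply, PiTensorProduct.tprod_mul_tprod]
  rfl

private lemma map_eq (c : ∀ i, S i) :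
    (PiTensorProduct.map fun i =>
        PiTensorProduct.map fun _ : Fin (n i) => LinearMap.mulLeft k (c i))
      = LinearMap.mulLeft k (ww k ι S n (fun i _ => c i)) := by
  apply PiTensorProduct.ext
  apply MultilinearMap.ext
  intro x
  simp only [LinearMap.compMultilinearMap_apply, PiTensorProduct.map_tprod,
    LinearMap.mulLeft_apply]
  unfold ww
  rw [PiTensorProduct.tprod_mul_tprod]
  congr 1
  funext i
  rw [Pi.mul_apply, inner_map_eq, LinearMap.mulLeft_apply]

private noncomputable def WWm :
    (∀ i, Fin (n i) → R) →* ⨂[k] i, (⨂[k] (_ : Fin (n i)), S i) where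
  toFun p := ww k ι S n (fun i j => φ i (p i j))
  map_one' := by
    show ww k ι S n (fun i j => φ i ((1 : ∀ i, Fin (n i) → R) i j)) = 1
    have h : (fun i (j : Fin (n i)) => φ i ((1 : ∀ i, Fin (n i) → R) i j))
        = fun i (_ : Fin (n i)) => (1 : S i) := by
      funext i j; exact map_one (φ i)
    rw [h, ww_one]
  map_mul' p q := by
    show ww k ι S n _ = ww k ι S n _ * ww k ι S n _
    rw [ww_mul]
    congr 1
    funext i j
    exact map_mul (φ i) _ _

private noncomputable def eP [DecidableEq ι] (i : ι) (j : Fin (n i)) (c : R) :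
    ∀ i', Fin (n i') → R :=
  Function.update (1 : ∀ i', Fin (n i') → R) i
    (Function.update ((1 : ∀ i', Fin (n i') → R) i) j c)

private lemma WW_e_eq [DecidableEq ι] (i : ι) (j : Fin (n i)) (c : R) :
    WWm k R ι S φ n (eP R ι n i j c)
      = PiTensorProduct.tprod k (Function.update
          (fun i' => PiTensorProduct.tprod k (fun _ : Fin (n i') => (1 : S i'))) i
          (PiTensorProduct.tprod k
            (Function.update (fun _ : Fin (n i) => (1 : S i)) j (φ i c)))) := by
  show PiTensorProduct.tprod k
      (fun i' => PiTensorProduct.tprod k (fun j' => φ i' (eP R ι n i j c i' j'))) = _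
  refine congrArg (PiTensorProduct.tprod k) (funext fun i' => ?_)
  by_cases h : i' = i
  · subst h
    rw [Function.update_self]
    have h1 : eP R ι n i' j c i' = Function.update ((1 : ∀ i'', Fin (n i'') → R) i') j c :=
      Function.update_self _ _ _
    rw [h1]
    refine congrArg (PiTensorProduct.tprod k) (funext fun j' => ?_)
    by_cases hj : j' = j
    · subst hj
      rw [Function.update_self, Function.update_self]
    · rw [Function.update_of_ne hj, Function.update_of_ne hj]
      exact map_one (φ i')
  · rw [Function.update_of_ne h]
    have h1 : eP R ι n i j c i' = (1 : ∀ i'', Fin (n i'') → R) i' :=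
      Function.update_of_ne h _ _
    rw [h1]
    exact congrArg (PiTensorProduct.tprod k) (funext fun j' => map_one (φ i'))

private lemma WW_e_add [DecidableEq ι] (i : ι) (j : Fin (n i)) (c c' : R) :
    WWm k R ι S φ n (eP R ι n i j (c + c'))
      = WWm k R ι S φ n (eP R ι n i j c) + WWm k R ι S φ n (eP R ι n i j c') := by
  rw [WW_e_eq, WW_e_eq, WW_e_eq, map_add (φ i)]
  rw [(PiTensorProduct.tprod k).map_update_add (fun _ : Fin (n i) => (1 : S i)) j
    (φ i c) (φ i c')]
  rw [(PiTensorProduct.tprod k).map_update_add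
    (fun i' => PiTensorProduct.tprod k (fun _ : Fin (n i') => (1 : S i'))) i]

private lemma WW_e_zero [DecidableEq ι] (i : ι) (j : Fin (n i)) :
    WWm k R ι S φ n (eP R ι n i j 0) = 0 := by
  rw [WW_e_eq, map_zero (φ i)]
  rw [(PiTensorProduct.tprod k).map_update_zero (fun _ : Fin (n i) => (1 : S i)) j]
  rw [(PiTensorProduct.tprod k).map_update_zero
    (fun i' => PiTensorProduct.tprod k (fun _ : Fin (n i') => (1 : S i'))) i]

private noncomputable def AA : Subring (⨂[k] i, (⨂[k] (_ : Fin (n i)), S i)) :=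
  Subring.closure (Set.range (WWm k R ι S φ n))

private lemma AA_comm : ∀ x ∈ AA k R ι S φ n, ∀ y ∈ AA k R ι S φ n, x * y = y * x := by
  intro x hx y hy
  induction hx, hy using Subring.closure_induction₂ with
  | mem_mem a b ha hb =>
    obtain ⟨p, rfl⟩ := ha
    obtain ⟨q, rfl⟩ := hb
    rw [← map_mul, ← map_mul, mul_comm]
  | zero_left x hx => exact Commute.zero_left x
  | zero_right x hx => exact Commute.zero_right x
  | one_left x hx => exact Commute.one_left x
  | one_right x hx => exact Commute.one_right x
  | neg_left x y hx hy h => exact Commute.neg_left h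
  | neg_right x y hx hy h => exact Commute.neg_right h
  | add_left x y z hx hy hz h1 h2 => exact Commute.add_left h1 h2
  | add_right x y z hx hy hz h1 h2 => exact Commute.add_right h1 h2
  | mul_left x y z hx hy hz h1 h2 => exact Commute.mul_left h1 h2
  | mul_right x y z hx hy hz h1 h2 => exact Commute.mul_right h1 h2

private noncomputable instance instCommAA : CommRing (AA k R ι S φ n) :=
  { (inferInstance : Ring (AA k R ι S φ n)) with
    mul_comm := fun a b => Subtype.ext (AA_comm k R ι S φ n a.1 a.2 b.1 b.2) }

private noncomputable def WWc : (∀ i, Fin (n i) → R) →* AA k R ι S φ n where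
  toFun p := ⟨WWm k R ι S φ n p, Subring.subset_closure ⟨p, rfl⟩⟩
  map_one' := Subtype.ext (map_one (WWm k R ι S φ n))
  map_mul' p q := Subtype.ext (map_mul (WWm k R ι S φ n) p q)

private lemma eP_one [DecidableEq ι] (i : ι) (j : Fin (n i)) :
    eP R ι n i j 1 = 1 := by
  funext i' j'
  unfold eP
  by_cases h : i' = i
  · subst h
    rw [Function.update_self]
    by_cases hj : j' = j
    · subst hj; rw [Function.update_self]; rfl
    · rw [Function.update_of_ne hj]
  · rw [Function.update_of_ne h]

private lemma eP_mul [DecidableEq ι] (i : ι) (j : Fin (n i)) (c c' : R) :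
    eP R ι n i j c * eP R ι n i j c' = eP R ι n i j (c * c') := by
  funext i' j'
  show eP R ι n i j c i' j' * eP R ι n i j c' i' j' = _
  unfold eP
  by_cases h : i' = i
  · subst h
    rw [Function.update_self, Function.update_self, Function.update_self]
    by_cases hj : j' = j
    · subst hj; rw [Function.update_self, Function.update_self, Function.update_self]
    · rw [Function.update_of_ne hj, Function.update_of_ne hj, Function.update_of_ne hj]
      show (1:R) * 1 = 1
      rw [mul_one]
  · rw [Function.update_of_ne h, Function.update_of_ne h, Function.update_of_ne h]
    show (1:R) * 1 = 1
    rw [mul_one]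

private noncomputable def fA [DecidableEq ι] (i : ι) (j : Fin (n i)) :
    R →+* AA k R ι S φ n where
  toFun c := WWc k R ι S φ n (eP R ι n i j c)
  map_one' := Subtype.ext (by
    show WWm k R ι S φ n (eP R ι n i j 1) = 1
    rw [eP_one, map_one])
  map_mul' c c' := Subtype.ext (by
    show WWm k R ι S φ n (eP R ι n i j (c * c'))
      = WWm k R ι S φ n (eP R ι n i j c) * WWm k R ι S φ n (eP R ι n i j c')
    rw [← map_mul, eP_mul])
  map_zero' := Subtype.ext (WW_e_zero k R ι S φ n i j)
  map_add' c c' := Subtype.ext (WW_e_add k R ι S φ n i j c c')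

private lemma eP_prod [DecidableEq ι] (t : ι → ℕ) (x : R) :
    (∏ q : Σ i, Fin (n i), (eP R ι n q.1 q.2 x) ^ (t q.1))
      = (fun i _ => x ^ t i) := by
  funext i₀ j₀
  rw [Finset.prod_apply, Finset.prod_apply]
  have hval : ∀ q : Σ i, Fin (n i), ((eP R ι n q.1 q.2 x ^ t q.1) i₀ j₀)
      = (eP R ι n q.1 q.2 x i₀ j₀) ^ t q.1 := fun q => rfl
  rw [Finset.prod_congr rfl (fun q _ => hval q)]
  rw [Finset.prod_eq_single (⟨i₀, j₀⟩ : Σ i, Fin (n i))]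
  · show (eP R ι n i₀ j₀ x i₀ j₀) ^ t i₀ = x ^ t i₀
    unfold eP
    rw [Function.update_self, Function.update_self]
  · intro q _ hq
    obtain ⟨i, j⟩ := q
    have h1 : eP R ι n i j x i₀ j₀ = 1 := by
      unfold eP
      by_cases h : i₀ = i
      · subst h
        have hj : j₀ ≠ j := by
          intro hjj
          exact hq (by rw [hjj])
        rw [Function.update_self, Function.update_of_ne hj]
        rfl
      · rw [Function.update_of_ne h]
        rfl
    rw [h1, one_pow]
  · intro h
    exact absurd (Finset.mem_univ _) h

private lemma fA_prod [DecidableEq ι] (t : ι → ℕ) (r : R) :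
    (∏ q : Σ i, Fin (n i), (fA k R ι S φ n q.1 q.2 r) ^ (t q.1))
      = WWc k R ι S φ n (fun i _ => r ^ t i) := by
  have h1 : ∀ q : Σ i, Fin (n i), (fA k R ι S φ n q.1 q.2 r) ^ (t q.1)
      = WWc k R ι S φ n ((eP R ι n q.1 q.2 r) ^ (t q.1)) := by
    intro q
    rw [map_pow]
    rfl
  rw [Finset.prod_congr rfl (fun q _ => h1 q), ← map_prod, eP_prod]

end Main

/-- **(Lemma 3.1, first part.)** Let `k` be a field, `R` a local ring with infinite residue
field, and for each `i` in a nonempty finite index set let `S i` be a `k`-algebra,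
`φ i : R → S i` a ring homomorphism and `n i, t i ≥ 1`. Let each unit `r ∈ R^×` act on
`B = ⊗_{i} (S i)^{⊗ n i}` by multiplying every tensor factor in the `i`-th slot by
`φ i (r) ^ t i`. Then the coinvariants `H_0(R^×, B)` vanish: the `k`-span of the elements
`r · b − b` is all of `B`. -/
theorem coinvariants_tensor_algebras_eq_top
    (k : Type) [Field k]
    (R : Type) [CommRing R] [IsLocalRing R] [Infinite (IsLocalRing.ResidueField R)]
    (ι : Type) [Fintype ι] [Nonempty ι]
    (S : ι → Type) [∀ i, Ring (S i)] [∀ i, Algebra k (S i)]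
    (φ : ∀ i, R →+* S i) (n t : ι → ℕ) (hn : ∀ i, 1 ≤ n i) (ht : ∀ i, 1 ≤ t i) :
    Submodule.span k
      {x : ⨂[k] i, (⨂[k] (_ : Fin (n i)), S i) |
        ∃ (r : Rˣ) (b : ⨂[k] i, (⨂[k] (_ : Fin (n i)), S i)),
          (PiTensorProduct.map fun i =>
            PiTensorProduct.map fun _ : Fin (n i) =>
              LinearMap.mulLeft k ((φ i (r : R)) ^ t i)) b - b = x} = ⊤ := by
  classical
  -- the action of a unit is left multiplication by `WWm (fun i _ => r ^ t i)`
  have hmap : ∀ (r : Rˣ) (b : ⨂[k] i, (⨂[k] (_ : Fin (n i)), S i)),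
      (PiTensorProduct.map fun i =>
          PiTensorProduct.map fun _ : Fin (n i) =>
            LinearMap.mulLeft k ((φ i (r : R)) ^ t i)) b
        = WWm k R ι S φ n (fun i _ => (r : R) ^ t i) * b := by
    intro r b
    have h1 := map_eq k ι S n (fun i => (φ i (r : R)) ^ t i)
    have h2 : WWm k R ι S φ n (fun i _ => (r : R) ^ t i)
        = ww k ι S n (fun i _ => (φ i (r : R)) ^ t i) := by
      show ww k ι S n _ = _
      congr 1
      funext i j
      exact map_pow (φ i) _ _
    rw [h2]
    calc (PiTensorProduct.map fun i =>
            PiTensorProduct.map fun _ : Fin (n i) =>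
              LinearMap.mulLeft k ((φ i (r : R)) ^ t i)) b
        = LinearMap.mulLeft k (ww k ι S n (fun i _ => (φ i (r : R)) ^ t i)) b := by rw [h1]
      _ = ww k ι S n (fun i _ => (φ i (r : R)) ^ t i) * b := rfl
  set M := Submodule.span k
      {x : ⨂[k] i, (⨂[k] (_ : Fin (n i)), S i) |
        ∃ (r : Rˣ) (b : ⨂[k] i, (⨂[k] (_ : Fin (n i)), S i)),
          (PiTensorProduct.map fun i =>
            PiTensorProduct.map fun _ : Fin (n i) =>
              LinearMap.mulLeft k ((φ i (r : R)) ^ t i)) b - b = x} with hM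
  have hgen : ∀ (r : Rˣ) (b : ⨂[k] i, (⨂[k] (_ : Fin (n i)), S i)),
      WWm k R ι S φ n (fun i _ => (r : R) ^ t i) * b - b ∈ M := by
    intro r b
    apply Submodule.subset_span
    exact ⟨r, b, by rw [hmap]⟩
  -- M is a right ideal
  have hMr : ∀ x ∈ M, ∀ c : ⨂[k] i, (⨂[k] (_ : Fin (n i)), S i), x * c ∈ M := by
    intro x hx
    induction hx using Submodule.span_induction with
    | mem x hxs =>
      obtain ⟨r, b, rfl⟩ := hxs
      intro c
      rw [hmap r b, sub_mul, mul_assoc]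
      exact hgen r (b * c)
    | zero => intro c; rw [zero_mul]; exact Submodule.zero_mem M
    | add x y hx hy ihx ihy => intro c; rw [add_mul]; exact Submodule.add_mem M (ihx c) (ihy c)
    | smul a x hx ih =>
      intro c
      have hsm : (a • x) * c = a • (x * c) := by
        rw [PiTensorProduct.mul_def, PiTensorProduct.mul_def, map_smul, LinearMap.smul_apply]
      rw [hsm]
      exact Submodule.smul_mem M a (ih c)
  -- the ideal of the commutative subring
  set uA : Rˣ → AA k R ι S φ n := fun r => WWc k R ι S φ n (fun i _ => (r : R) ^ t i) with huA
  set I : Ideal (AA k R ι S φ n) := Ideal.span {x | ∃ r : Rˣ, x = uA r - 1} with hI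
  have h1I : (1 : AA k R ι S φ n) ∈ I := by
    by_contra h1
    have hne : I ≠ ⊤ := (Ideal.ne_top_iff_one I).mpr h1
    obtain ⟨𝔪, hmax, hle⟩ := Ideal.exists_le_maximal I hne
    letI := hmax
    letI : Field (AA k R ι S φ n ⧸ 𝔪) := Ideal.Quotient.field 𝔪
    set mk : AA k R ι S φ n →+* AA k R ι S φ n ⧸ 𝔪 := Ideal.Quotient.mk 𝔪 with hmk
    set sidx : Finset (Σ _ : Σ i, Fin (n i), ℕ) :=
      (Finset.univ : Finset (Σ i, Fin (n i))).sigma (fun p => Finset.range (t p.1)) with hsidx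
    have hsne : sidx.Nonempty := by
      refine ⟨⟨⟨Classical.arbitrary ι, ⟨0, hn _⟩⟩, 0⟩, ?_⟩
      rw [hsidx, Finset.mem_sigma]
      exact ⟨Finset.mem_univ _, Finset.mem_range.mpr (ht _)⟩
    have hfs : ∀ r : Rˣ,
        ∏ q ∈ sidx, (mk.comp (fA k R ι S φ n q.1.1 q.1.2)) (r : R) = 1 := by
      intro r
      rw [hsidx, Finset.prod_sigma]
      have h1 : ∀ p ∈ (Finset.univ : Finset (Σ i, Fin (n i))),
          (∏ _m ∈ Finset.range (t p.1), (mk.comp (fA k R ι S φ n p.1 p.2)) (r : R))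
            = mk ((fA k R ι S φ n p.1 p.2 (r : R)) ^ t p.1) := by
        intro p _
        rw [Finset.prod_const, Finset.card_range, RingHom.comp_apply, map_pow]
      rw [Finset.prod_congr rfl h1, ← map_prod, fA_prod]
      have hmem : uA r - 1 ∈ 𝔪 := hle (Ideal.subset_span ⟨r, rfl⟩)
      have h0 : mk (uA r - 1) = 0 := Ideal.Quotient.eq_zero_iff_mem.mpr hmem
      rw [map_sub, map_one, sub_eq_zero] at h0
      exact h0
    exact lemB (fun q : Σ _ : Σ i, Fin (n i), ℕ =>
      mk.comp (fA k R ι S φ n q.1.1 q.1.2)) sidx hsne hfs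
  -- membership in I implies membership in M after coercion
  have hIM : ∀ x : AA k R ι S φ n, x ∈ I → (x : ⨂[k] i, (⨂[k] (_ : Fin (n i)), S i)) ∈ M := by
    intro x hx
    induction hx using Submodule.span_induction with
    | mem x hxs =>
      obtain ⟨r, rfl⟩ := hxs
      have hco : ((uA r - 1 : AA k R ι S φ n) : ⨂[k] i, (⨂[k] (_ : Fin (n i)), S i))
          = WWm k R ι S φ n (fun i _ => (r : R) ^ t i) * 1 - 1 := by
        rw [mul_one]
        rfl
      rw [hco]
      exact hgen r 1
    | zero => exact Submodule.zero_mem M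
    | add x y hx hy ihx ihy =>
      have : ((x + y : AA k R ι S φ n) : ⨂[k] i, (⨂[k] (_ : Fin (n i)), S i))
          = (x : ⨂[k] i, (⨂[k] (_ : Fin (n i)), S i)) + y := rfl
      rw [this]
      exact Submodule.add_mem M ihx ihy
    | smul a x hx ih =>
      have : ((a • x : AA k R ι S φ n) : ⨂[k] i, (⨂[k] (_ : Fin (n i)), S i))
          = (x : ⨂[k] i, (⨂[k] (_ : Fin (n i)), S i)) * a := by
        rw [smul_eq_mul]
        exact AA_comm k R ι S φ n a.1 a.2 x.1 x.2
      rw [this]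
      exact hMr _ ih _
  have h1M : (1 : ⨂[k] i, (⨂[k] (_ : Fin (n i)), S i)) ∈ M := hIM 1 h1I
  rw [Submodule.eq_top_iff']
  intro x
  have hx := hMr 1 h1M x
  rwa [one_mul] at hx
end

section
/- Let k be a field, let R be a commutative local ring whose residue field is infinite, let ι be a nonempty finite index set, and for each i ∈ ι let S_i be a k-algebra, φ_i : R → S_i a ring homomorphism, t_i ≥ 1 an integer, P_i and Q_i S_i-modules, and n_{i,1}, n_{i,2} ≥ 0 integers with n_{i,1} + n_{i,2} ≥ 1. Let M = ⊗_{i∈ι} ( Λ^{n_{i,1}}_k P_i ⊗_k V_{n_{i,2}}(Q_i) ), where R^× acts k-linearly so that r ∈ R^× acts on each factor coming from P_i and from Q_i as multiplication by φ_i(r)^{t_i} (inducing the diagonal action on the exterior power Λ^{n_{i,1}}_k P_i and on the symmetric tensors V_{n_{i,2}}(Q_i)). Then the group homology H_l(R^×, M) vanishes for all l ≥ 0. -/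
open scoped TensorProduct

namespace HS
open CategoryTheory

variable (k : Type) [CommRing k] (G : Type) [Group G]

/-- The submodule of a representation generated by the elements `g • a - a`. -/
def coinvariantsKer (A : Rep.{0} k G) : Submodule k A :=
  Submodule.span k {x | ∃ (g : G) (a : A), A.ρ g a - a = x}

lemma coinvariantsKer_le_comap {A B : Rep.{0} k G} (f : A ⟶ B) :
    coinvariantsKer k G A ≤ (coinvariantsKer k G B).comap f.hom.toLinearMap := by
  rw [coinvariantsKer, Submodule.span_le]
  rintro x ⟨g, a, rfl⟩
  refine Submodule.mem_comap.2 (Submodule.subset_span ⟨g, f.hom a, ?_⟩)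
  erw [map_sub f.hom (A.ρ g a) a]
  erw [Rep.hom_comm_apply f g a]

/-- The coinvariants functor `Rep k G ⥤ ModuleCat k`, `A ↦ A_G = A / ⟨g • a - a⟩`. -/
noncomputable def coinvariantsFunctor : Rep.{0} k G ⥤ ModuleCat k where
  obj A := ModuleCat.of k (A ⧸ coinvariantsKer k G A)
  map f := ModuleCat.ofHom (Submodule.mapQ _ _ f.hom.toLinearMap (coinvariantsKer_le_comap k G f))
  map_id A := by
    apply ModuleCat.hom_ext
    apply Submodule.linearMap_qext
    ext x
    rfl
  map_comp f g := by
    apply ModuleCat.hom_ext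
    apply Submodule.linearMap_qext
    ext x
    rfl

instance : (coinvariantsFunctor k G).Additive where
  map_add := by
    intro A B f g
    apply ModuleCat.hom_ext
    apply Submodule.linearMap_qext
    ext x
    rfl

/-- Group homology `H_n(G, M)` with coefficients in a representation `ρ` of `G` on `M`, defined
as the `n`-th left derived functor of the coinvariants functor applied to `M`. -/
noncomputable def groupHomologyRep (V : Type) [AddCommGroup V] [Module k V]
    (ρ : Representation k G V) (n : ℕ) : ModuleCat k :=
  (((coinvariantsFunctor k G).leftDerived n).obj (Rep.of ρ))

end HS

namespace HS

variable {k : Type} [Field k]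

/-- The submodule `V_n(Q) = (Q^{⊗n})^{Σ_n}` of symmetric tensors of a `k`-module `Q`. -/
noncomputable def symmetricTensors (k : Type) [Field k] (Q : Type) [AddCommGroup Q] [Module k Q]
    (n : ℕ) : Submodule k (⨂[k] (_ : Fin n), Q) :=
  ⨅ σ : Equiv.Perm (Fin n),
    LinearMap.eqLocus
      ((PiTensorProduct.reindex k (fun _ : Fin n => Q) σ).toLinearMap) LinearMap.id

lemma map_mem_symmetricTensors (Q : Type) [AddCommGroup Q] [Module k Q]
    (n : ℕ) (f : Q →ₗ[k] Q) (x : ⨂[k] (_ : Fin n), Q) (hx : x ∈ symmetricTensors k Q n) :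
    (PiTensorProduct.map fun _ : Fin n => f) x ∈ symmetricTensors k Q n := by
  simp only [symmetricTensors, Submodule.mem_iInf, LinearMap.mem_eqLocus,
    LinearEquiv.coe_coe, LinearMap.id_coe, id_eq] at *
  intro σ
  have := PiTensorProduct.map_reindex (fun _ : Fin n => f) (σ : Fin n ≃ Fin n) x
  rw [← this, hx σ]

/-- The diagonal action of a linear endomorphism on symmetric tensors. -/
noncomputable def symmetricTensorsMap (Q : Type) [AddCommGroup Q] [Module k Q] (n : ℕ)
    (f : Q →ₗ[k] Q) : (symmetricTensors k Q n) →ₗ[k] (symmetricTensors k Q n) :=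
  (PiTensorProduct.map fun _ : Fin n => f).restrict
    (fun x hx => map_mem_symmetricTensors Q n f x hx)

lemma map_mem_exteriorPower (P : Type) [AddCommGroup P] [Module k P] (n : ℕ)
    (f : P →ₗ[k] P) (x : ExteriorAlgebra k P) (hx : x ∈ ⋀[k]^n P) :
    (ExteriorAlgebra.map f) x ∈ ⋀[k]^n P := by
  have h2 : Submodule.map (ExteriorAlgebra.map f).toLinearMap
      (LinearMap.range (ExteriorAlgebra.ι k (M := P))) ≤
        LinearMap.range (ExteriorAlgebra.ι k (M := P)) := by
    rintro y ⟨z, ⟨w, rfl⟩, rfl⟩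
    exact ⟨f w, (ExteriorAlgebra.map_apply_ι f w).symm⟩
  have h1 : ∀ m : ℕ, Submodule.map (ExteriorAlgebra.map f).toLinearMap
      ((LinearMap.range (ExteriorAlgebra.ι k (M := P))) ^ m) ≤
        (LinearMap.range (ExteriorAlgebra.ι k (M := P))) ^ m := by
    intro m
    rw [Submodule.map_pow]
    induction m with
    | zero => simp
    | succ m ih => rw [pow_succ, pow_succ]; exact mul_le_mul' ih h2
  exact h1 n ⟨x, hx, rfl⟩

/-- The functorial action of a linear endomorphism on the `n`-th exterior power. -/
noncomputable def exteriorPowerMap (P : Type) [AddCommGroup P] [Module k P] (n : ℕ)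
    (f : P →ₗ[k] P) : (⋀[k]^n P) →ₗ[k] (⋀[k]^n P) :=
  (ExteriorAlgebra.map f).toLinearMap.restrict
    (fun x hx => map_mem_exteriorPower P n f x hx)

section BigModule

variable (k : Type) [Field k] (ι : Type)
    (S : ι → Type) [∀ i, Ring (S i)] [∀ i, Algebra k (S i)]
    (P : ι → Type) [∀ i, AddCommGroup (P i)] [∀ i, Module k (P i)]
    (Q : ι → Type) [∀ i, AddCommGroup (Q i)] [∀ i, Module k (Q i)]
    (n₁ n₂ : ι → ℕ)

/-- The module `⊗_i (Λ^{n₁ i} (P i) ⊗ V_{n₂ i}(Q i))`. -/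
noncomputable def extSymTensor : Type :=
  ⨂[k] i, ((⋀[k]^(n₁ i) (P i)) ⊗[k] (symmetricTensors k (Q i) (n₂ i)))

noncomputable instance extSymTensor.instAddCommGroup :
    AddCommGroup (extSymTensor k ι P Q n₁ n₂) :=
  @PiTensorProduct.instAddCommGroup ι k _
    (fun i => ((⋀[k]^(n₁ i) (P i)) ⊗[k] (symmetricTensors k (Q i) (n₂ i))))
    (fun _ => inferInstance) (fun _ => inferInstance)

noncomputable instance extSymTensor.instModule : Module k (extSymTensor k ι P Q n₁ n₂) :=
  inferInstanceAs (Module k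
    (⨂[k] i, ((⋀[k]^(n₁ i) (P i)) ⊗[k] (symmetricTensors k (Q i) (n₂ i)))))

end BigModule

end HS


namespace Lemma32

set_option maxHeartbeats 1000000
set_option synthInstance.maxHeartbeats 100000

open Finset

set_option linter.unusedSectionVars false

variable {k : Type} [Field k] {τ : Type} [DecidableEq τ]

variable {E E' E₁ E₂ E₃ : Type} [AddCommGroup E] [AddCommGroup E'] [AddCommGroup E₁]
  [AddCommGroup E₂] [AddCommGroup E₃]

/-- `F : Finset τ → E` is "polynomial of degree ≤ d" if it has an expansion
`F T = ∑ J ⊆ T, W J` with `W J = 0` whenever `#J > d`. -/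
def IsPoly (d : ℕ) (F : Finset τ → E) : Prop :=
  ∃ W : Finset τ → E, (∀ J : Finset τ, d < J.card → W J = 0) ∧
    ∀ T : Finset τ, F T = ∑ J ∈ T.powerset, W J

lemma isPoly_const (d : ℕ) (e : E) : IsPoly d (fun _ : Finset τ => e) := by
  refine ⟨fun J => if J = ∅ then e else 0, fun J hJ => ?_, fun T => ?_⟩
  · show (if J = ∅ then e else 0) = 0
    rw [if_neg]; rintro rfl; simp at hJ
  · rw [Finset.sum_ite_eq' T.powerset ∅ fun _ => e, if_pos (Finset.empty_mem_powerset T)]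

lemma isPoly_zero (d : ℕ) : IsPoly d (fun _ : Finset τ => (0 : E)) := isPoly_const d 0

lemma IsPoly.add {d : ℕ} {F G : Finset τ → E} (hF : IsPoly d F) (hG : IsPoly d G) :
    IsPoly d (fun T => F T + G T) := by
  obtain ⟨W, hW, hWF⟩ := hF; obtain ⟨V, hV, hVG⟩ := hG
  refine ⟨fun J => W J + V J, fun J hJ => by
      show W J + V J = 0
      rw [hW J hJ, hV J hJ, add_zero],
    fun T => by
      show F T + G T = _
      rw [hWF T, hVG T, Finset.sum_add_distrib]⟩

lemma IsPoly.mono {d d' : ℕ} (h : d ≤ d') {F : Finset τ → E} (hF : IsPoly d F) : IsPoly d' F :=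
  let ⟨W, hW, hWF⟩ := hF
  ⟨W, fun J hJ => hW J (lt_of_le_of_lt h hJ), hWF⟩

lemma IsPoly.map {d : ℕ} {F : Finset τ → E} (hF : IsPoly d F) (f : E →+ E') :
    IsPoly d (fun T => f (F T)) :=
  let ⟨W, hW, hWF⟩ := hF
  ⟨fun J => f (W J), fun J hJ => by show f (W J) = 0; rw [hW J hJ, map_zero],
    fun T => by show f (F T) = _; rw [hWF T, map_sum]⟩

lemma isPoly_sum (b : τ → E) : IsPoly 1 (fun T : Finset τ => ∑ j ∈ T, b j) := by
  refine ⟨fun J => ∑ j ∈ J, if J = {j} then b j else 0, fun J hJ => ?_, fun T => ?_⟩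
  · refine Finset.sum_eq_zero fun j hj => if_neg ?_
    rintro rfl; simp at hJ
  · have h1 : ∀ J ∈ T.powerset, (∑ j ∈ J, if J = {j} then b j else 0)
        = ∑ j ∈ T, if J = {j} then b j else 0 := fun J hJ =>
      Finset.sum_subset (Finset.mem_powerset.1 hJ) fun j _ hj => if_neg (by
        rintro rfl; exact hj (Finset.mem_singleton_self j))
  -- RHS = ∑ j ∈ T, b j
    rw [Finset.sum_congr rfl h1, Finset.sum_comm]
    refine (Finset.sum_congr rfl fun j hj => ?_).symm
    rw [Finset.sum_congr rfl fun (J : Finset τ) (hJ : J ∈ T.powerset) =>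
      (if_congr eq_comm rfl rfl :
        (if J = {j} then b j else 0) = if {j} = J then b j else 0)]
    rw [Finset.sum_ite_eq T.powerset {j} fun _ => b j,
      if_pos (Finset.mem_powerset.2 (Finset.singleton_subset_iff.2 hj))]

lemma core_sum (K J : Finset τ) (hKJ : K ⊆ J) :
    ∑ J' ∈ J.powerset.filter (fun J' => K ⊆ J'), (-1 : ℤ) ^ J'.card
      = if K = J then (-1 : ℤ) ^ J.card else 0 := by
  have h1 : ∑ J' ∈ J.powerset.filter (fun J' => K ⊆ J'), (-1 : ℤ) ^ J'.card
      = ∑ T ∈ (J \ K).powerset, (-1 : ℤ) ^ (T.card + K.card) := by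
    refine Finset.sum_nbij' (fun J' => J' \ K) (fun T => K ∪ T) ?_ ?_ ?_ ?_ ?_
    · intro J' hJ'
      rw [Finset.mem_filter, Finset.mem_powerset] at hJ'
      exact Finset.mem_powerset.2 (Finset.sdiff_subset_sdiff hJ'.1 Finset.Subset.rfl)
    · intro T hT
      rw [Finset.mem_powerset] at hT
      refine Finset.mem_filter.2 ⟨Finset.mem_powerset.2 (Finset.union_subset hKJ
        (hT.trans Finset.sdiff_subset)), Finset.subset_union_left⟩
    · intro J' hJ'
      rw [Finset.mem_filter] at hJ'
      exact Finset.union_sdiff_of_subset hJ'.2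
    · intro T hT
      rw [Finset.mem_powerset] at hT
      refine Finset.union_sdiff_cancel_left ?_
      exact Finset.disjoint_of_subset_right hT Finset.disjoint_sdiff
    · intro J' hJ'
      rw [Finset.mem_filter, Finset.mem_powerset] at hJ'
      rw [← Finset.card_sdiff_add_card_eq_card hJ'.2]
  rw [h1]
  have h2 : ∑ T ∈ (J \ K).powerset, (-1 : ℤ) ^ (T.card + K.card)
      = ((-1 : ℤ) ^ K.card) * ∑ T ∈ (J \ K).powerset, (-1 : ℤ) ^ T.card := by
    rw [Finset.mul_sum]
    exact Finset.sum_congr rfl fun T _ => by ring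
  rw [h2, Finset.sum_powerset_neg_one_pow_card]
  by_cases h : K = J
  · subst h; simp
  · rw [if_neg h, if_neg (fun hE => h (Finset.Subset.antisymm hKJ
      (Finset.sdiff_eq_empty_iff_subset.1 hE))), mul_zero]

lemma IsPoly.alt_sum_eq_zero [Fintype τ] {d : ℕ} {F : Finset τ → E} (hF : IsPoly d F)
    (hd : d < Fintype.card τ) : ∑ T : Finset τ, (-1 : ℤ) ^ T.card • F T = 0 := by
  obtain ⟨W, hW, hWF⟩ := hF
  have key : ∀ T : Finset τ, (-1 : ℤ) ^ T.card • F T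
      = ∑ J : Finset τ, if J ⊆ T then (-1 : ℤ) ^ T.card • W J else 0 := by
    intro T
    rw [hWF T, Finset.smul_sum]
    rw [show T.powerset = Finset.univ.filter (fun J => J ⊆ T) by
      ext J; simp [Finset.mem_powerset]]
    rw [Finset.sum_filter]
  rw [Finset.sum_congr rfl fun T _ => key T, Finset.sum_comm]
  refine Finset.sum_eq_zero fun J _ => ?_
  have : ∑ T : Finset τ, (if J ⊆ T then (-1 : ℤ) ^ T.card • W J else 0)
      = (∑ T ∈ Finset.univ.filter (fun T : Finset τ => J ⊆ T), (-1 : ℤ) ^ T.card) • W J := by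
    rw [Finset.sum_smul, Finset.sum_filter]
  rw [this]
  have h2 : Finset.univ.filter (fun T : Finset τ => J ⊆ T)
      = (Finset.univ : Finset τ).powerset.filter (fun T => J ⊆ T) := by
    rw [Finset.powerset_univ]
  rw [h2, core_sum J Finset.univ (Finset.subset_univ J)]
  by_cases h : J = Finset.univ
  · subst h
    rw [hW Finset.univ (by simpa [Finset.card_univ] using hd), smul_zero]
  · rw [if_neg h, zero_smul]


lemma IsPoly.bilin [Module k E₁] [Module k E₂] [Module k E₃]
    (μ : E₁ →ₗ[k] E₂ →ₗ[k] E₃) {d₁ d₂ : ℕ} {F : Finset τ → E₁} {G : Finset τ → E₂}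
    (hF : IsPoly d₁ F) (hG : IsPoly d₂ G) :
    IsPoly (d₁ + d₂) (fun T => μ (F T) (G T)) := by
  obtain ⟨W, hW, hWF⟩ := hF; obtain ⟨V, hV, hVG⟩ := hG
  refine ⟨fun L => ∑ J ∈ L.powerset, ∑ K ∈ L.powerset,
      if J ∪ K = L then μ (W J) (V K) else 0, fun L hL => ?_, fun T => ?_⟩
  · show (∑ J ∈ L.powerset, ∑ K ∈ L.powerset, if J ∪ K = L then μ (W J) (V K) else 0) = 0
    refine Finset.sum_eq_zero fun J _ => Finset.sum_eq_zero fun K _ => ?_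
    split_ifs with h
    · rcases le_or_gt J.card d₁ with h₁ | h₁
      · have h₂ : d₂ < K.card := by
          have h3 := Finset.card_union_le J K
          have h4 : L.card ≤ J.card + K.card := h ▸ h3
          omega
        rw [hV K h₂, map_zero]
      · rw [hW J h₁, map_zero, LinearMap.zero_apply]
    · rfl
  · show μ (F T) (G T) = _
    have step1 : ∀ L ∈ T.powerset,
        (∑ J ∈ L.powerset, ∑ K ∈ L.powerset, if J ∪ K = L then μ (W J) (V K) else 0)
          = ∑ J ∈ T.powerset, ∑ K ∈ T.powerset, if J ∪ K = L then μ (W J) (V K) else 0 := by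
      intro L hL
      rw [Finset.mem_powerset] at hL
      have hmono := Finset.powerset_mono.2 hL
      rw [Finset.sum_subset hmono (fun J _ hJ => Finset.sum_eq_zero fun K hK => if_neg
        (fun hu => hJ (Finset.mem_powerset.2 (by rw [← hu]; exact Finset.subset_union_left))))]
      refine Finset.sum_congr rfl fun J _ => ?_
      exact Finset.sum_subset hmono (fun K _ hK => if_neg
        (fun hu => hK (Finset.mem_powerset.2 (by rw [← hu]; exact Finset.subset_union_right))))
    rw [Finset.sum_congr rfl step1, Finset.sum_comm]
    have step2 : ∀ J ∈ T.powerset,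
        (∑ L ∈ T.powerset, ∑ K ∈ T.powerset, if J ∪ K = L then μ (W J) (V K) else 0)
          = ∑ K ∈ T.powerset, μ (W J) (V K) := by
      intro J hJ
      rw [Finset.sum_comm]
      refine Finset.sum_congr rfl fun K hK => ?_
      rw [Finset.sum_ite_eq T.powerset (J ∪ K) (fun _ => μ (W J) (V K)), if_pos
        (Finset.mem_powerset.2 (Finset.union_subset (Finset.mem_powerset.1 hJ)
          (Finset.mem_powerset.1 hK)))]
    rw [Finset.sum_congr rfl step2, hWF T, hVG T]
    rw [map_sum μ W T.powerset, LinearMap.sum_apply]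
    exact Finset.sum_congr rfl fun J _ => map_sum _ _ _

lemma IsPoly.multilinear {κ : Type} [Fintype κ] [DecidableEq κ] {Z : κ → Type}
    [∀ i, AddCommGroup (Z i)] [∀ i, Module k (Z i)] [Module k E]
    (μ : MultilinearMap k Z E) (d : κ → ℕ) (F : ∀ i, Finset τ → Z i)
    (h : ∀ i, IsPoly (d i) (F i)) :
    IsPoly (∑ i, d i) (fun T => μ (fun i => F i T)) := by
  choose W hW hWF using h
  refine ⟨fun L => ∑ g ∈ Fintype.piFinset (fun _ : κ => L.powerset),
      if Finset.univ.sup g = L then μ (fun i => W i (g i)) else 0, fun L hL => ?_, fun T => ?_⟩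
  · show (∑ g ∈ Fintype.piFinset (fun _ : κ => L.powerset),
      if Finset.univ.sup g = L then μ (fun i => W i (g i)) else 0) = 0
    refine Finset.sum_eq_zero fun g hg => ?_
    split_ifs with h
    · by_cases hbig : ∃ i, d i < (g i).card
      · obtain ⟨i, hi⟩ := hbig
        have hz : W i (g i) = 0 := hW i _ hi
        have : (fun j => W j (g j)) = Function.update (fun j => W j (g j)) i 0 := by
          rw [← hz, Function.update_eq_self]
        rw [this, μ.map_update_zero]  -- name?
      · push_neg at hbig
        exfalso
        have h1 : L.card ≤ ∑ i, (g i).card := by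
          rw [← h, Finset.sup_eq_biUnion]
          exact Finset.card_biUnion_le
        have h2 : (∑ i, (g i).card) ≤ ∑ i, d i := Finset.sum_le_sum fun i _ => hbig i
        omega
    · rfl
  · show μ (fun i => F i T) = _
    have step1 : ∀ L ∈ T.powerset,
        (∑ g ∈ Fintype.piFinset (fun _ : κ => L.powerset),
          if Finset.univ.sup g = L then μ (fun i => W i (g i)) else 0)
        = ∑ g ∈ Fintype.piFinset (fun _ : κ => T.powerset),
          if Finset.univ.sup g = L then μ (fun i => W i (g i)) else 0 := by
      intro L hL
      rw [Finset.mem_powerset] at hL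
      refine Finset.sum_subset (Fintype.piFinset_subset _ _ fun i =>
        Finset.powerset_mono.2 hL) (fun g hg hg' => if_neg fun hsup => hg' ?_)
      refine Fintype.mem_piFinset.2 fun i => Finset.mem_powerset.2 ?_
      rw [← hsup]
      exact Finset.le_sup (f := g) (Finset.mem_univ i)
    rw [Finset.sum_congr rfl step1, Finset.sum_comm]
    have step2 : ∀ g ∈ Fintype.piFinset (fun _ : κ => T.powerset),
        (∑ L ∈ T.powerset, if Finset.univ.sup g = L then μ (fun i => W i (g i)) else 0)
          = μ (fun i => W i (g i)) := by
      intro g hg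
      rw [Finset.sum_ite_eq T.powerset (Finset.univ.sup g), if_pos (Finset.mem_powerset.2
        (Finset.sup_le fun i _ => Finset.mem_powerset.1 (Fintype.mem_piFinset.1 hg i)))]
    rw [Finset.sum_congr rfl step2]
    have harg : (fun i => F i T) = fun i => ∑ J ∈ T.powerset, W i J :=
      funext fun i => hWF i T
    rw [harg, μ.map_sum_finset (A := fun _ : κ => T.powerset) (g := fun i J => W i J)]


lemma IsPoly.pow {A : Type} [Ring A] [Algebra k A] {d : ℕ} {F : Finset τ → A}
    (hF : IsPoly d F) (t : ℕ) : IsPoly (d * t) (fun T => F T ^ t) := by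
  induction t with
  | zero =>
    have h0 : (fun T : Finset τ => F T ^ 0) = fun _ => (1 : A) := funext fun T => pow_zero _
    rw [h0, Nat.mul_zero]
    exact isPoly_const 0 1
  | succ t ih =>
    have h2 := IsPoly.bilin (k := k) (LinearMap.mul k A) ih hF
    have h3 : (fun T : Finset τ => F T ^ (t + 1))
        = fun T => (LinearMap.mul k A) (F T ^ t) (F T) :=
      funext fun T => by rw [LinearMap.mul_apply', ← pow_succ]
    rw [h3, Nat.mul_succ]
    exact h2


section App

open HS

variable {S : Type} [Ring S] [Algebra k S]

lemma isPoly_piTensorMap {Q : Type} [AddCommGroup Q] [Module S Q] [Module k Q]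
    [IsScalarTower k S Q] (n : ℕ) {dt : ℕ} {s : Finset τ → S} (hs : IsPoly dt s)
    (z : ⨂[k] (_ : Fin n), Q) :
    IsPoly (n * dt) (fun T => PiTensorProduct.map (fun _ : Fin n =>
      (Algebra.lsmul k k Q (s T) : Q →ₗ[k] Q)) z) := by
  induction z using PiTensorProduct.induction_on with
  | smul_tprod r f =>
    have he : (fun T => PiTensorProduct.map (fun _ : Fin n =>
        (Algebra.lsmul k k Q (s T) : Q →ₗ[k] Q)) (r • PiTensorProduct.tprod k f))
        = fun T => r • (PiTensorProduct.tprod k (fun p => s T • f p)) := by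
      funext T
      rw [map_smul, PiTensorProduct.map_tprod]
      rfl
    rw [he]
    have hcomp : ∀ p : Fin n, IsPoly dt (fun T => s T • f p) := fun p =>
      hs.map ((smulAddHom S Q).flip (f p))
    have hmul := IsPoly.multilinear (k := k) (PiTensorProduct.tprod k)
        (fun _ : Fin n => dt) (fun p T => s T • f p) hcomp
    have hdeg : (∑ _p : Fin n, dt) = n * dt := by
      simp [Finset.sum_const, Finset.card_univ]
    rw [hdeg] at hmul
    exact hmul.map (DistribMulAction.toAddMonoidHom _ r)
  | add x y hx hy =>
    have he : (fun T => PiTensorProduct.map (fun _ : Fin n =>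
        (Algebra.lsmul k k Q (s T) : Q →ₗ[k] Q)) (x + y))
        = fun T => PiTensorProduct.map (fun _ : Fin n =>
            (Algebra.lsmul k k Q (s T) : Q →ₗ[k] Q)) x
          + PiTensorProduct.map (fun _ : Fin n =>
            (Algebra.lsmul k k Q (s T) : Q →ₗ[k] Q)) y := funext fun T => map_add _ _ _
    rw [he]
    exact hx.add hy

lemma isPoly_symMap {Q : Type} [AddCommGroup Q] [Module S Q] [Module k Q]
    [IsScalarTower k S Q] (n : ℕ) {dt : ℕ} {s : Finset τ → S} (hs : IsPoly dt s)
    (y : symmetricTensors k Q n) :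
    IsPoly (n * dt) (fun T =>
      symmetricTensorsMap Q n (Algebra.lsmul k k Q (s T)) y) := by
  obtain ⟨π, hπ⟩ := LinearMap.exists_leftInverse_of_injective
    (symmetricTensors k Q n).subtype (Submodule.ker_subtype _)
  have h1 := (isPoly_piTensorMap (S := S) n hs
    ((y : ⨂[k] (_ : Fin n), Q))).map π.toAddMonoidHom
  have he : (fun T => π (PiTensorProduct.map (fun _ : Fin n =>
      (Algebra.lsmul k k Q (s T) : Q →ₗ[k] Q)) ↑y))
      = fun T => symmetricTensorsMap Q n (Algebra.lsmul k k Q (s T)) y := by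
    funext T
    have h2 : PiTensorProduct.map (fun _ : Fin n => (Algebra.lsmul k k Q (s T) : Q →ₗ[k] Q)) ↑y
        = ((symmetricTensors k Q n).subtype)
            (symmetricTensorsMap Q n (Algebra.lsmul k k Q (s T)) y) := rfl
    rw [h2]
    exact LinearMap.ext_iff.1 hπ _
  rw [← he]
  exact h1

lemma isPoly_extAmbient {P : Type} [AddCommGroup P] [Module S P] [Module k P]
    [IsScalarTower k S P] {dt : ℕ} {s : Finset τ → S} (hs : IsPoly dt s)
    {n : ℕ} {x : ExteriorAlgebra k P} (hx : x ∈ ⋀[k]^n P) :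
    IsPoly (n * dt) (fun T =>
      ExteriorAlgebra.map (Algebra.lsmul k k P (s T)) x) := by
  refine Submodule.pow_induction_on_left'
    (M := LinearMap.range (ExteriorAlgebra.ι k (M := P)))
    (C := fun n x _ => IsPoly (n * dt)
      (fun T => ExteriorAlgebra.map (Algebra.lsmul k k P (s T)) x)) ?_ ?_ ?_ hx
  · intro r
    have he : (fun T => ExteriorAlgebra.map (Algebra.lsmul k k P (s T))
        (algebraMap k (ExteriorAlgebra k P) r))
        = fun _ => algebraMap k (ExteriorAlgebra k P) r :=
      funext fun T => AlgHom.commutes _ r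
    rw [he]
    exact isPoly_const _ _
  · intro x y i hx' hy' ihx ihy
    have he : (fun T => ExteriorAlgebra.map (Algebra.lsmul k k P (s T)) (x + y))
        = fun T => ExteriorAlgebra.map (Algebra.lsmul k k P (s T)) x
            + ExteriorAlgebra.map (Algebra.lsmul k k P (s T)) y :=
      funext fun T => map_add _ _ _
    rw [he]
    exact ihx.add ihy
  · intro m hm i z hz ih
    obtain ⟨v, rfl⟩ := hm
    have he : (fun T => ExteriorAlgebra.map (Algebra.lsmul k k P (s T))
          (ExteriorAlgebra.ι k v * z))
        = fun T => (LinearMap.mul k (ExteriorAlgebra k P))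
            (ExteriorAlgebra.ι k (s T • v))
            (ExteriorAlgebra.map (Algebra.lsmul k k P (s T)) z) := by
      funext T
      rw [LinearMap.mul_apply', map_mul, ExteriorAlgebra.map_apply_ι]
      rfl
    rw [he]
    have h1 : IsPoly dt (fun T => ExteriorAlgebra.ι k (s T • v)) :=
      hs.map ((ExteriorAlgebra.ι k (M := P)).toAddMonoidHom.comp ((smulAddHom S P).flip v))
    have h2 := IsPoly.bilin (k := k) (LinearMap.mul k (ExteriorAlgebra k P)) h1 ih
    have hdeg : dt + i * dt = i.succ * dt := by
      rw [Nat.succ_mul, Nat.add_comm]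
    rw [← hdeg]
    exact h2

lemma isPoly_extMap {P : Type} [AddCommGroup P] [Module S P] [Module k P]
    [IsScalarTower k S P] (n : ℕ) {dt : ℕ} {s : Finset τ → S} (hs : IsPoly dt s)
    (x : ⋀[k]^n P) :
    IsPoly (n * dt) (fun T =>
      exteriorPowerMap P n (Algebra.lsmul k k P (s T)) x) := by
  obtain ⟨π, hπ⟩ := LinearMap.exists_leftInverse_of_injective
    (⋀[k]^n P).subtype (Submodule.ker_subtype _)
  have h1 := (isPoly_extAmbient (S := S) hs x.2).map π.toAddMonoidHom
  have he : (fun T => π (ExteriorAlgebra.map (Algebra.lsmul k k P (s T)) ↑x))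
      = fun T => exteriorPowerMap P n (Algebra.lsmul k k P (s T)) x := by
    funext T
    have h2 : ExteriorAlgebra.map (Algebra.lsmul k k P (s T)) ↑x
        = ((⋀[k]^n P).subtype) (exteriorPowerMap P n (Algebra.lsmul k k P (s T)) x) := rfl
    rw [h2]
    exact LinearMap.ext_iff.1 hπ _
  rw [← he]
  exact h1

lemma isPoly_factor {P : Type} [AddCommGroup P] [Module S P] [Module k P]
    [IsScalarTower k S P] {Q : Type} [AddCommGroup Q] [Module S Q] [Module k Q]
    [IsScalarTower k S Q] (n₁ n₂ : ℕ) {dt : ℕ} {s : Finset τ → S} (hs : IsPoly dt s)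
    (w : (⋀[k]^n₁ P) ⊗[k] (symmetricTensors k Q n₂)) :
    IsPoly ((n₁ + n₂) * dt) (fun T => TensorProduct.map
      (exteriorPowerMap P n₁ (Algebra.lsmul k k P (s T)))
      (symmetricTensorsMap Q n₂ (Algebra.lsmul k k Q (s T))) w) := by
  induction w using TensorProduct.induction_on with
  | zero =>
    have he : (fun T => TensorProduct.map
        (exteriorPowerMap P n₁ (Algebra.lsmul k k P (s T)))
        (symmetricTensorsMap Q n₂ (Algebra.lsmul k k Q (s T)))
        (0 : (⋀[k]^n₁ P) ⊗[k] (symmetricTensors k Q n₂)))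
        = fun _ => (0 : (⋀[k]^n₁ P) ⊗[k] (symmetricTensors k Q n₂)) :=
      funext fun T => map_zero _
    rw [he]
    exact isPoly_zero _
  | tmul x y =>
    have he : (fun T => TensorProduct.map
        (exteriorPowerMap P n₁ (Algebra.lsmul k k P (s T)))
        (symmetricTensorsMap Q n₂ (Algebra.lsmul k k Q (s T))) (x ⊗ₜ[k] y))
        = fun T => (TensorProduct.mk k _ _)
            (exteriorPowerMap P n₁ (Algebra.lsmul k k P (s T)) x)
            (symmetricTensorsMap Q n₂ (Algebra.lsmul k k Q (s T)) y) :=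
      funext fun T => TensorProduct.map_tmul _ _ _ _
    rw [he]
    have h2 := IsPoly.bilin (k := k)
      (E₃ := (⋀[k]^n₁ P) ⊗[k] (symmetricTensors k Q n₂))
      (TensorProduct.mk k (⋀[k]^n₁ P) (symmetricTensors k Q n₂))
      (isPoly_extMap (S := S) n₁ hs x) (isPoly_symMap (S := S) n₂ hs y)
    have hdeg : n₁ * dt + n₂ * dt = (n₁ + n₂) * dt := (Nat.add_mul n₁ n₂ dt).symm
    rw [← hdeg]
    exact h2
  | add w₁ w₂ h₁ h₂ =>
    have he : (fun T => TensorProduct.map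
        (exteriorPowerMap P n₁ (Algebra.lsmul k k P (s T)))
        (symmetricTensorsMap Q n₂ (Algebra.lsmul k k Q (s T))) (w₁ + w₂))
        = fun T => TensorProduct.map
            (exteriorPowerMap P n₁ (Algebra.lsmul k k P (s T)))
            (symmetricTensorsMap Q n₂ (Algebra.lsmul k k Q (s T))) w₁
          + TensorProduct.map
            (exteriorPowerMap P n₁ (Algebra.lsmul k k P (s T)))
            (symmetricTensorsMap Q n₂ (Algebra.lsmul k k Q (s T))) w₂ :=
      funext fun T => map_add _ _ _
    rw [he]
    exact h₁.add h₂

end App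


section Big

open HS

variable (k)
variable {R : Type} [CommRing R]
  {ι : Type} [Fintype ι]
  {S : ι → Type} [∀ i, Ring (S i)] [∀ i, Algebra k (S i)]
  (φ : ∀ i, R →+* S i) (t : ι → ℕ)
  {P : ι → Type} [∀ i, AddCommGroup (P i)] [∀ i, Module (S i) (P i)]
  [∀ i, Module k (P i)] [∀ i, IsScalarTower k (S i) (P i)]
  {Q : ι → Type} [∀ i, AddCommGroup (Q i)] [∀ i, Module (S i) (Q i)]
  [∀ i, Module k (Q i)] [∀ i, IsScalarTower k (S i) (Q i)]
  (n₁ n₂ : ι → ℕ)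

noncomputable local instance bigACG :
    AddCommGroup (⨂[k] i, ((⋀[k]^(n₁ i) (P i)) ⊗[k] (symmetricTensors k (Q i) (n₂ i)))) :=
  @PiTensorProduct.instAddCommGroup ι k _
    (fun i => ((⋀[k]^(n₁ i) (P i)) ⊗[k] (symmetricTensors k (Q i) (n₂ i))))
    (fun _ => inferInstance) (fun _ => inferInstance)

lemma isPoly_top (a : τ → R)
    (x : ⨂[k] i, ((⋀[k]^(n₁ i) (P i)) ⊗[k] (symmetricTensors k (Q i) (n₂ i)))) :
    IsPoly (∑ i, (n₁ i + n₂ i) * t i)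
      (fun T => (PiTensorProduct.map fun i =>
        TensorProduct.map
          (exteriorPowerMap (P i) (n₁ i)
            (Algebra.lsmul k k (P i) ((φ i (∑ j ∈ T, a j)) ^ t i)))
          (symmetricTensorsMap (Q i) (n₂ i)
            (Algebra.lsmul k k (Q i) ((φ i (∑ j ∈ T, a j)) ^ t i)))) x) := by
  classical
  have hs : ∀ i, IsPoly (t i) (fun T : Finset τ => (φ i (∑ j ∈ T, a j)) ^ t i) := by
    intro i
    have h0 : (fun T : Finset τ => (φ i (∑ j ∈ T, a j)) ^ t i)
        = fun T => (∑ j ∈ T, φ i (a j)) ^ t i :=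
      funext fun T => by rw [map_sum]
    rw [h0]
    have h1 := (isPoly_sum (fun j => φ i (a j))).pow (k := k) (t i)
    rwa [one_mul] at h1
  induction x using PiTensorProduct.induction_on with
  | smul_tprod r w =>
    have he : (fun T => (PiTensorProduct.map fun i =>
        TensorProduct.map
          (exteriorPowerMap (P i) (n₁ i)
            (Algebra.lsmul k k (P i) ((φ i (∑ j ∈ T, a j)) ^ t i)))
          (symmetricTensorsMap (Q i) (n₂ i)
            (Algebra.lsmul k k (Q i) ((φ i (∑ j ∈ T, a j)) ^ t i))))
          (r • PiTensorProduct.tprod k w))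
        = fun T => r • ((PiTensorProduct.tprod k) fun i =>
            TensorProduct.map
              (exteriorPowerMap (P i) (n₁ i)
                (Algebra.lsmul k k (P i) ((φ i (∑ j ∈ T, a j)) ^ t i)))
              (symmetricTensorsMap (Q i) (n₂ i)
                (Algebra.lsmul k k (Q i) ((φ i (∑ j ∈ T, a j)) ^ t i)))
              (w i)) := by
      funext T
      rw [map_smul, PiTensorProduct.map_tprod]
    rw [he]
    have hmul := IsPoly.multilinear (k := k) (PiTensorProduct.tprod k)
      (fun i => (n₁ i + n₂ i) * t i)
      (fun i T => TensorProduct.map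
        (exteriorPowerMap (P i) (n₁ i)
          (Algebra.lsmul k k (P i) ((φ i (∑ j ∈ T, a j)) ^ t i)))
        (symmetricTensorsMap (Q i) (n₂ i)
          (Algebra.lsmul k k (Q i) ((φ i (∑ j ∈ T, a j)) ^ t i)))
        (w i))
      (fun i => isPoly_factor (S := S i) (n₁ i) (n₂ i) (hs i) (w i))
    exact hmul.map (DistribMulAction.toAddMonoidHom _ r)
  | add x y hx hy =>
    have he : (fun T => (PiTensorProduct.map fun i =>
        TensorProduct.map
          (exteriorPowerMap (P i) (n₁ i)
            (Algebra.lsmul k k (P i) ((φ i (∑ j ∈ T, a j)) ^ t i)))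
          (symmetricTensorsMap (Q i) (n₂ i)
            (Algebra.lsmul k k (Q i) ((φ i (∑ j ∈ T, a j)) ^ t i)))) (x + y))
        = fun T => (PiTensorProduct.map fun i =>
            TensorProduct.map
              (exteriorPowerMap (P i) (n₁ i)
                (Algebra.lsmul k k (P i) ((φ i (∑ j ∈ T, a j)) ^ t i)))
              (symmetricTensorsMap (Q i) (n₂ i)
                (Algebra.lsmul k k (Q i) ((φ i (∑ j ∈ T, a j)) ^ t i)))) x
          + (PiTensorProduct.map fun i =>
            TensorProduct.map
              (exteriorPowerMap (P i) (n₁ i)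
                (Algebra.lsmul k k (P i) ((φ i (∑ j ∈ T, a j)) ^ t i)))
              (symmetricTensorsMap (Q i) (n₂ i)
                (Algebra.lsmul k k (Q i) ((φ i (∑ j ∈ T, a j)) ^ t i)))) y :=
      funext fun T => map_add _ _ _
    rw [he]
    exact hx.add hy

lemma key_sum [Fintype τ] (a : τ → R)
    (hcard : (∑ i, (n₁ i + n₂ i) * t i) < Fintype.card τ) :
    ∑ T : Finset τ, (-1 : ℤ) ^ T.card • (PiTensorProduct.map fun i =>
        TensorProduct.map
          (exteriorPowerMap (P i) (n₁ i)
            (Algebra.lsmul k k (P i) ((φ i (∑ j ∈ T, a j)) ^ t i)))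
          (symmetricTensorsMap (Q i) (n₂ i)
            (Algebra.lsmul k k (Q i) ((φ i (∑ j ∈ T, a j)) ^ t i)))) = 0 := by
  apply LinearMap.ext
  intro x
  have h := (isPoly_top k φ t n₁ n₂ a x).alt_sum_eq_zero hcard
  rw [LinearMap.zero_apply, LinearMap.coe_sum, Finset.sum_apply]
  refine Eq.trans (Finset.sum_congr rfl fun T _ => ?_) h
  rfl

lemma extMap_zero {P : Type} [AddCommGroup P] [Module k P] {n : ℕ} (hn : 1 ≤ n) :
    exteriorPowerMap P n (0 : P →ₗ[k] P) = 0 := by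
  apply LinearMap.ext; intro x
  apply Subtype.ext
  show ExteriorAlgebra.map (0 : P →ₗ[k] P) ↑x = ((0 : Module.End k (⋀[k]^n P)) x : _)
  have key : ∀ (m : ℕ) (z : ExteriorAlgebra k P), z ∈ ⋀[k]^m P → 1 ≤ m →
      ExteriorAlgebra.map (0 : P →ₗ[k] P) z = 0 := by
    intro m z hz
    refine Submodule.pow_induction_on_left'
      (M := LinearMap.range (ExteriorAlgebra.ι k (M := P)))
      (C := fun m z _ => 1 ≤ m → ExteriorAlgebra.map (0 : P →ₗ[k] P) z = 0) ?_ ?_ ?_ hz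
    · intro r h; omega
    · intro x y i hx hy ihx ihy h; rw [map_add, ihx h, ihy h, add_zero]
    · intro mm hm i z hz ih _
      obtain ⟨v, rfl⟩ := hm
      rw [map_mul, ExteriorAlgebra.map_apply_ι, LinearMap.zero_apply, map_zero, zero_mul]
  rw [key n ↑x x.2 hn]
  rfl

lemma symMap_zero {Q : Type} [AddCommGroup Q] [Module k Q] {n : ℕ} (hn : 1 ≤ n) :
    symmetricTensorsMap Q n (0 : Q →ₗ[k] Q) = 0 := by
  apply LinearMap.ext; intro y
  apply Subtype.ext
  show PiTensorProduct.map (fun _ : Fin n => (0 : Q →ₗ[k] Q)) ↑y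
    = ((0 : Module.End k (symmetricTensors k Q n)) y : _)
  have key : ∀ z : ⨂[k] (_ : Fin n), Q,
      PiTensorProduct.map (fun _ : Fin n => (0 : Q →ₗ[k] Q)) z = 0 := by
    intro z
    induction z using PiTensorProduct.induction_on with
    | smul_tprod r f =>
      rw [map_smul, PiTensorProduct.map_tprod]
      rw [(PiTensorProduct.tprod k).map_coord_zero (⟨0, hn⟩ : Fin n)
        (by rw [LinearMap.zero_apply]), smul_zero]
    | add x y hx hy => rw [map_add, hx, hy, add_zero]
  rw [key ↑y]
  rfl

lemma top_zero [Nonempty ι] (ht : ∀ i, 1 ≤ t i) (hn : ∀ i, 1 ≤ n₁ i + n₂ i) :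
    (PiTensorProduct.map fun i =>
        TensorProduct.map
          (exteriorPowerMap (P i) (n₁ i) (Algebra.lsmul k k (P i) ((φ i (0 : R)) ^ t i)))
          (symmetricTensorsMap (Q i) (n₂ i) (Algebra.lsmul k k (Q i) ((φ i (0 : R)) ^ t i))))
      = (0 : Module.End k
          (⨂[k] i, ((⋀[k]^(n₁ i) (P i)) ⊗[k] (symmetricTensors k (Q i) (n₂ i))))) := by
  have hfac : ∀ i, (TensorProduct.map
      (exteriorPowerMap (P i) (n₁ i) (Algebra.lsmul k k (P i) ((φ i (0:R)) ^ t i)))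
      (symmetricTensorsMap (Q i) (n₂ i) (Algebra.lsmul k k (Q i) ((φ i (0:R)) ^ t i)))) = 0 := by
    intro i
    have hz : (φ i (0 : R)) ^ t i = 0 := by
      rw [map_zero, zero_pow (by have := ht i; omega)]
    rw [hz]
    have hlP : (Algebra.lsmul k k (P i) (0 : S i) : P i →ₗ[k] P i) = 0 := map_zero _
    have hlQ : (Algebra.lsmul k k (Q i) (0 : S i) : Q i →ₗ[k] Q i) = 0 := map_zero _
    rw [hlP, hlQ]
    by_cases h1 : 1 ≤ n₁ i
    · rw [extMap_zero k h1, TensorProduct.map_zero_left]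
    · have h2 : 1 ≤ n₂ i := by have := hn i; omega
      rw [symMap_zero k h2, TensorProduct.map_zero_right]
  apply LinearMap.ext; intro z
  induction z using PiTensorProduct.induction_on with
  | smul_tprod r f =>
    rw [LinearMap.zero_apply, map_smul, PiTensorProduct.map_tprod]
    have i₀ : ι := Classical.arbitrary ι
    rw [(PiTensorProduct.tprod k).map_coord_zero i₀ (by rw [hfac i₀]; rfl), smul_zero]
  | add x y hx hy =>
    rw [LinearMap.zero_apply] at hx hy ⊢
    rw [map_add, hx, hy, add_zero]

end Big

section Units

lemma exists_forall_sum_ne_zero {F : Type} [AddCommGroup F] [Infinite F] {ι' : Type}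
    [DecidableEq ι'] (s : Finset ι') :
    ∃ x : ι' → F, ∀ T ⊆ s, T.Nonempty → ∑ j ∈ T, x j ≠ 0 := by
  classical
  induction s using Finset.induction_on with
  | empty =>
    exact ⟨0, fun T hT hne => absurd (Finset.subset_empty.1 hT) hne.ne_empty⟩
  | insert a s ha ih =>
    obtain ⟨x, hx⟩ := ih
    obtain ⟨y, hy⟩ := Infinite.exists_notMem_finset
      (s.powerset.image (fun T => -∑ j ∈ T, x j))
    refine ⟨Function.update x a y, fun T hT hne => ?_⟩
    by_cases haT : a ∈ T
    · have hTa : T.erase a ⊆ s := by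
        intro j hj
        have hj' := hT (Finset.mem_of_mem_erase hj)
        exact (Finset.mem_insert.1 hj').resolve_left (Finset.ne_of_mem_erase hj)
      rw [← Finset.add_sum_erase _ _ haT]
      have hsum : ∑ j ∈ T.erase a, Function.update x a y j = ∑ j ∈ T.erase a, x j :=
        Finset.sum_congr rfl fun j hj => Function.update_of_ne (Finset.ne_of_mem_erase hj) _ _
      rw [Function.update_self, hsum]
      intro h0
      exact hy (Finset.mem_image.2 ⟨T.erase a, Finset.mem_powerset.2 hTa,
        by rw [← eq_neg_of_add_eq_zero_left h0]⟩)
    · have hTs : T ⊆ s := fun j hj =>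
        (Finset.mem_insert.1 (hT hj)).resolve_left (fun h => haT (by rw [← h]; exact hj))
      have hsum : ∑ j ∈ T, Function.update x a y j = ∑ j ∈ T, x j :=
        Finset.sum_congr rfl fun j hj =>
          Function.update_of_ne (fun h => haT (by rw [← h]; exact hj)) _ _
      rw [hsum]
      exact hx T hTs hne

lemma exists_good_units (R : Type) [CommRing R] [IsLocalRing R]
    [Infinite (IsLocalRing.ResidueField R)] (m : ℕ) :
    ∃ u : Fin m → R, ∀ T : Finset (Fin m), T.Nonempty → IsUnit (∑ j ∈ T, u j) := by
  obtain ⟨x, hx⟩ := exists_forall_sum_ne_zero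
    (F := IsLocalRing.ResidueField R) (s := (Finset.univ : Finset (Fin m)))
  choose u hu using fun j => IsLocalRing.residue_surjective (R := R) (x j)
  refine ⟨u, fun T hT => ?_⟩
  by_contra hnu
  have hmem : (∑ j ∈ T, u j) ∈ IsLocalRing.maximalIdeal R := hnu
  have h0 : IsLocalRing.residue R (∑ j ∈ T, u j) = 0 :=
    (Ideal.Quotient.eq_zero_iff_mem).2 hmem
  rw [map_sum] at h0
  refine hx T (Finset.subset_univ T) hT ?_
  rw [← h0]
  exact Finset.sum_congr rfl fun j _ => (hu j).symm

end Units


section RepPart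

open CategoryTheory

variable (k) {G : Type} [CommGroup G]

/-- The endomorphism of a representation of a commutative group given by the action of `g`. -/
noncomputable def actHom (A : Rep.{0} k G) (g : G) : A ⟶ A := Rep.ofHom
  { toLinearMap := A.ρ g
    isIntertwining' := fun h => by
      ext x
      show A.ρ g (A.ρ h x) = A.ρ h (A.ρ g x)
      rw [← Module.End.mul_apply, ← map_mul, mul_comm g h, map_mul, Module.End.mul_apply] }

lemma actHom_hom (A : Rep.{0} k G) (g : G) : (actHom k A g).hom.toLinearMap = A.ρ g := rfl

lemma coinvariantsFunctor_map_actHom (A : Rep.{0} k G) (g : G) :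
    (HS.coinvariantsFunctor k G).map (actHom k A g) = 𝟙 _ := by
  apply ModuleCat.hom_ext
  apply Submodule.linearMap_qext
  ext x
  show ((HS.coinvariantsFunctor k G).map (actHom k A g)) (Submodule.Quotient.mk x)
    = (𝟙 ((HS.coinvariantsFunctor k G).obj A)) (Submodule.Quotient.mk x)
  erw [Submodule.mapQ_apply]
  show Submodule.Quotient.mk (A.ρ g x) = Submodule.Quotient.mk x
  rw [Submodule.Quotient.eq]
  exact Submodule.subset_span ⟨g, x, rfl⟩
  exact HS.coinvariantsKer_le_comap k G (actHom k A g)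

lemma leftDerived_map_actHom (A : Rep.{0} k G) (g : G) (l : ℕ) :
    ((HS.coinvariantsFunctor k G).leftDerived l).map (actHom k A g) = 𝟙 _ := by
  let Pr : ProjectiveResolution A := ProjectiveResolution.of A
  let γ : Pr.complex ⟶ Pr.complex :=
    { f := fun i => actHom k (Pr.complex.X i) g
      comm' := fun i j hij => by
        ext x
        show (Pr.complex.d i j).hom ((Pr.complex.X i).ρ g x)
          = (Pr.complex.X j).ρ g ((Pr.complex.d i j).hom x)
        exact Rep.hom_comm_apply (Pr.complex.d i j) g x }
  have w : γ ≫ Pr.π = Pr.π ≫ (ChainComplex.single₀ (Rep k G)).map (actHom k A g) := by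
    apply (ChainComplex.toSingle₀Equiv Pr.complex A).injective
    apply Subtype.ext
    simp only [ChainComplex.toSingle₀Equiv_apply_coe, HomologicalComplex.comp_f,
      ChainComplex.single₀_map_f_zero]
    ext x
    show (Pr.π.f 0).hom ((Pr.complex.X 0).ρ g x) = A.ρ g ((Pr.π.f 0).hom x)
    exact Rep.hom_comm_apply (Pr.π.f 0) g x
  rw [Functor.leftDerived_map_eq (HS.coinvariantsFunctor k G) l (actHom k A g) γ w]
  have hγ : (((HS.coinvariantsFunctor k G).mapHomologicalComplex
      (ComplexShape.down ℕ))).map γ = 𝟙 _ := by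
    apply HomologicalComplex.hom_ext
    intro i
    show (HS.coinvariantsFunctor k G).map (γ.f i) = 𝟙 _
    exact coinvariantsFunctor_map_actHom k (Pr.complex.X i) g
  rw [Functor.comp_map, hγ, CategoryTheory.Functor.map_id, Category.id_comp, Iso.hom_inv_id]

lemma leftDerived_map_combo (A : Rep.{0} k G) {α : Type} (s : Finset α) (c : α → ℤ)
    (g : α → G) (f : A ⟶ A) (hf : f = ∑ a ∈ s, c a • actHom k A (g a)) (l : ℕ) :
    ((HS.coinvariantsFunctor k G).leftDerived l).map f
      = (∑ a ∈ s, c a) • 𝟙 (((HS.coinvariantsFunctor k G).leftDerived l).obj A) := by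
  let Pr : ProjectiveResolution A := ProjectiveResolution.of A
  let γ : Pr.complex ⟶ Pr.complex :=
    { f := fun i => ∑ a ∈ s, c a • actHom k (Pr.complex.X i) (g a)
      comm' := fun i j hij => by
        rw [Preadditive.sum_comp, Preadditive.comp_sum]
        refine Finset.sum_congr rfl fun a _ => ?_
        rw [Preadditive.zsmul_comp, Preadditive.comp_zsmul]
        congr 1
        ext x
        show (Pr.complex.d i j).hom ((Pr.complex.X i).ρ (g a) x)
          = (Pr.complex.X j).ρ (g a) ((Pr.complex.d i j).hom x)
        exact Rep.hom_comm_apply _ _ x }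
  have w : γ ≫ Pr.π = Pr.π ≫ (ChainComplex.single₀ (Rep k G)).map f := by
    apply (ChainComplex.toSingle₀Equiv Pr.complex A).injective
    apply Subtype.ext
    simp only [ChainComplex.toSingle₀Equiv_apply_coe, HomologicalComplex.comp_f,
      ChainComplex.single₀_map_f_zero]
    rw [hf]
    show (∑ a ∈ s, c a • actHom k (Pr.complex.X 0) (g a)) ≫ Pr.π.f 0
      = Pr.π.f 0 ≫ ∑ a ∈ s, c a • actHom k A (g a)
    rw [Preadditive.sum_comp]; erw [Preadditive.comp_sum]
    refine Finset.sum_congr rfl fun a _ => ?_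
    rw [Preadditive.zsmul_comp]; erw [Preadditive.comp_zsmul]
    congr 1
    ext x
    show (Pr.π.f 0).hom ((Pr.complex.X 0).ρ (g a) x) = A.ρ (g a) ((Pr.π.f 0).hom x)
    exact Rep.hom_comm_apply _ _ x
  rw [Functor.leftDerived_map_eq (HS.coinvariantsFunctor k G) l f γ w]
  have hγ : ((HS.coinvariantsFunctor k G).mapHomologicalComplex (ComplexShape.down ℕ)).map γ
      = (∑ a ∈ s, c a) • 𝟙 _ := by
    apply HomologicalComplex.hom_ext
    intro i
    rw [HomologicalComplex.zsmul_f_apply, HomologicalComplex.id_f]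
    show (HS.coinvariantsFunctor k G).map (γ.f i) = _
    have hγi : γ.f i = ∑ a ∈ s, c a • actHom k (Pr.complex.X i) (g a) := rfl
    rw [hγi, CategoryTheory.Functor.map_sum]
    rw [Finset.sum_congr rfl (fun a (_ : a ∈ s) => by
      rw [CategoryTheory.Functor.map_zsmul, coinvariantsFunctor_map_actHom])]
    rw [← Finset.sum_smul]
    rfl
  rw [Functor.comp_map, hγ, CategoryTheory.Functor.map_zsmul,
    CategoryTheory.Functor.map_id, Preadditive.zsmul_comp, Preadditive.comp_zsmul,
    Category.id_comp, Iso.hom_inv_id]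

end RepPart

end Lemma32


open HS in
/-- **(Lemma 3.2.)** Let `k` be a field, `R` a local ring with infinite residue field, and for
each `i` in a nonempty finite index set let `S i` be a `k`-algebra, `φ i : R → S i` a ring
homomorphism, `t i ≥ 1`, `P i` and `Q i` modules over `S i`, and `n₁ i + n₂ i ≥ 1`. Let `R^×`
act on `M = ⊗_i (Λ^{n₁ i} (P i) ⊗ V_{n₂ i}(Q i))` with `r` acting on each factor coming from
`P i` and `Q i` as multiplication by `φ i (r) ^ t i`. Then `H_l(R^×, M) = 0` for all `l ≥ 0`. -/
theorem groupHomologyRep_units_tensor_ext_sym_isZero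
    (k : Type) [Field k]
    (R : Type) [CommRing R] [IsLocalRing R] [Infinite (IsLocalRing.ResidueField R)]
    (ι : Type) [Fintype ι] [Nonempty ι]
    (S : ι → Type) [∀ i, Ring (S i)] [∀ i, Algebra k (S i)]
    (φ : ∀ i, R →+* S i) (t : ι → ℕ) (ht : ∀ i, 1 ≤ t i)
    (P : ι → Type) [∀ i, AddCommGroup (P i)] [∀ i, Module (S i) (P i)]
    [∀ i, Module k (P i)] [∀ i, IsScalarTower k (S i) (P i)]
    (Q : ι → Type) [∀ i, AddCommGroup (Q i)] [∀ i, Module (S i) (Q i)]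
    [∀ i, Module k (Q i)] [∀ i, IsScalarTower k (S i) (Q i)]
    (n₁ n₂ : ι → ℕ) (hn : ∀ i, 1 ≤ n₁ i + n₂ i)
    (ρ : Representation k Rˣ (extSymTensor k ι P Q n₁ n₂))
    (hρ : ∀ r : Rˣ, ρ r = PiTensorProduct.map fun i =>
      TensorProduct.map
        (exteriorPowerMap (P i) (n₁ i) (Algebra.lsmul k k (P i) ((φ i (r : R)) ^ t i)))
        (symmetricTensorsMap (Q i) (n₂ i) (Algebra.lsmul k k (Q i) ((φ i (r : R)) ^ t i)))) :
    ∀ l : ℕ, CategoryTheory.Limits.IsZero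
      (groupHomologyRep k Rˣ (extSymTensor k ι P Q n₁ n₂) ρ l) := by
  intro l
  classical
  let F := HS.coinvariantsFunctor k Rˣ
  let A : Rep k Rˣ := Rep.of ρ
  let N : ℕ := ∑ i, (n₁ i + n₂ i) * t i
  obtain ⟨u, hu⟩ := Lemma32.exists_good_units R (N + 1)
  let e : Finset (Fin (N + 1)) → (A ⟶ A) := fun T =>
    if h : T.Nonempty then Lemma32.actHom k A (hu T h).unit else 0
  have hehom : ∀ T : Finset (Fin (N + 1)), (e T).hom.toLinearMap
      = (PiTensorProduct.map fun i =>
          TensorProduct.map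
            (exteriorPowerMap (P i) (n₁ i)
              (Algebra.lsmul k k (P i) ((φ i (∑ j ∈ T, u j)) ^ t i)))
            (symmetricTensorsMap (Q i) (n₂ i)
              (Algebra.lsmul k k (Q i) ((φ i (∑ j ∈ T, u j)) ^ t i)))) := by
    intro T
    by_cases h : T.Nonempty
    · have h1 : (((hu T h).unit : Rˣ) : R) = ∑ j ∈ T, u j := (hu T h).unit_spec
      have h2 := hρ (hu T h).unit
      have h3 : (e T).hom.toLinearMap = ρ (hu T h).unit := by
        simp only [e, dif_pos h]; rfl
      rw [h3, h2, h1]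
    · have hT : T = ∅ := Finset.not_nonempty_iff_eq_empty.1 h
      subst hT
      have h3 : (e (∅ : Finset (Fin (N + 1)))).hom.toLinearMap = 0 := by
        simp only [e, dif_neg h]; rfl
      rw [h3, Finset.sum_empty]
      exact (Lemma32.top_zero k φ t n₁ n₂ ht hn).symm
  let homAdd : (A ⟶ A) →+ (A →ₗ[k] A) :=
    { toFun := fun f => f.hom.toLinearMap
      map_zero' := rfl
      map_add' := fun f g => rfl }
  have hkey : ∑ T : Finset (Fin (N + 1)), (-1 : ℤ) ^ T.card • (e T).hom.toLinearMap = 0 := by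
    rw [Finset.sum_congr rfl (fun T _ => by rw [hehom T])]
    exact Lemma32.key_sum k φ t n₁ n₂ u
      (by rw [Fintype.card_fin]; exact Nat.lt_succ_self N)
  have hsum : (∑ T : Finset (Fin (N + 1)), (-1 : ℤ) ^ T.card • e T) = (0 : A ⟶ A) := by
    apply Rep.hom_ext
    apply Representation.IntertwiningMap.ext
    have hhom : (∑ T : Finset (Fin (N + 1)), (-1 : ℤ) ^ T.card • e T).hom.toLinearMap
        = ∑ T : Finset (Fin (N + 1)), (-1 : ℤ) ^ T.card • (e T).hom.toLinearMap := by
      rw [show (∑ T : Finset (Fin (N + 1)), (-1 : ℤ) ^ T.card • e T).hom.toLinearMap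
        = homAdd (∑ T : Finset (Fin (N + 1)), (-1 : ℤ) ^ T.card • e T) from rfl, map_sum]
      exact Finset.sum_congr rfl fun T _ => homAdd.map_zsmul _ _
    rw [hhom, hkey]
    rfl
  let g : Finset (Fin (N + 1)) → Rˣ := fun T =>
    if h : T.Nonempty then (hu T h).unit else 1
  have hf0 : (0 : A ⟶ A) = ∑ T ∈ Finset.univ.filter
      (fun T : Finset (Fin (N + 1)) => T.Nonempty),
        (-1 : ℤ) ^ T.card • Lemma32.actHom k A (g T) := by
    rw [← hsum, Finset.sum_filter]
    refine Finset.sum_congr rfl fun T _ => ?_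
    by_cases h : T.Nonempty
    · rw [if_pos h]
      congr 1
      simp only [e, g, dif_pos h]
    · rw [if_neg h]
      have he2 : e T = 0 := by simp only [e, dif_neg h]
      rw [he2, smul_zero]
  have hcomb := Lemma32.leftDerived_map_combo k A
    (Finset.univ.filter (fun T : Finset (Fin (N + 1)) => T.Nonempty))
    (fun T => (-1 : ℤ) ^ T.card) g 0 hf0 l
  have hzero := Lemma32.leftDerived_map_combo k A (∅ : Finset (Finset (Fin (N + 1))))
    (fun T => (-1 : ℤ) ^ T.card) g 0 (by rw [Finset.sum_empty]) l
  have hcoef : (∑ T ∈ Finset.univ.filter (fun T : Finset (Fin (N + 1)) => T.Nonempty),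
      (-1 : ℤ) ^ T.card) = -1 := by
    have h0 := Finset.sum_powerset_neg_one_pow_card_of_nonempty
      (x := (Finset.univ : Finset (Fin (N + 1)))) Finset.univ_nonempty
    rw [Finset.powerset_univ] at h0
    have h1 : (Finset.univ : Finset (Finset (Fin (N + 1))))
        = insert ∅ (Finset.univ.filter (fun T : Finset (Fin (N + 1)) => T.Nonempty)) := by
      ext T
      simp [Finset.nonempty_iff_ne_empty, or_comm, em]
    rw [h1, Finset.sum_insert (by simp)] at h0
    simp only [Finset.card_empty, pow_zero] at h0
    omega
  have hid : CategoryTheory.CategoryStruct.id ((F.leftDerived l).obj A) = 0 := by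
    have h1 : ((0 : ℤ) • CategoryTheory.CategoryStruct.id ((F.leftDerived l).obj A))
        = (-1 : ℤ) • CategoryTheory.CategoryStruct.id ((F.leftDerived l).obj A) := by
      calc (0 : ℤ) • CategoryTheory.CategoryStruct.id ((F.leftDerived l).obj A)
          = (∑ T ∈ (∅ : Finset (Finset (Fin (N + 1)))), (-1 : ℤ) ^ T.card) •
              CategoryTheory.CategoryStruct.id ((F.leftDerived l).obj A) := by rw [Finset.sum_empty]
        _ = (F.leftDerived l).map (0 : A ⟶ A) := hzero.symm
        _ = (∑ T ∈ Finset.univ.filter (fun T : Finset (Fin (N + 1)) => T.Nonempty),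
              (-1 : ℤ) ^ T.card) • CategoryTheory.CategoryStruct.id ((F.leftDerived l).obj A) := hcomb
        _ = (-1 : ℤ) • CategoryTheory.CategoryStruct.id ((F.leftDerived l).obj A) := by rw [hcoef]
    rw [zero_smul, neg_smul, one_smul] at h1
    exact neg_eq_zero.1 h1.symm
  rw [CategoryTheory.Limits.IsZero.iff_id_eq_zero]
  exact hid
end
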